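/- arXiv:1007.5442 — 11 statements merged into one kernel-verified Lean document; each statement's English description precedes it below -/
import Mathlib

section
/- Dominance is transitive on the Sugeno-Weber family: for all real numbers a, b, c ∈ (0,∞), if the Sugeno-Weber t-norm T_a dominates T_b and T_b dominates T_c, then T_a dominates T_c. -/
set_option maxHeartbeats 1000000

open Set

/-- The Sugeno-Weber t-norm with parameter `l`. -/
noncomputable def TSW (l : ℝ) (u v : ℝ) : ℝ :=
  max 0 ((1 - l) * u * v + l * (u + v - 1))

/-- `T₁` dominates `T₂` (on the unit interval). -/
def Dominates (T₁ T₂ : ℝ → ℝ → ℝ) : Prop :=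
  ∀ x y u v : ℝ, x ∈ Icc (0:ℝ) 1 → y ∈ Icc (0:ℝ) 1 → u ∈ Icc (0:ℝ) 1 → v ∈ Icc (0:ℝ) 1 →
    T₁ (T₂ x y) (T₂ u v) ≥ T₂ (T₁ x u) (T₁ y v)

noncomputable def fSW (l u v : ℝ) : ℝ := (1 - l) * u * v + l * (u + v - 1)
lemma TSW_eq (l u v : ℝ) : TSW l u v = max 0 (fSW l u v) := rfl
def Psi (a c : ℝ) : Prop :=
  ∀ w : ℝ, 0 ≤ w → w ≤ 1 →
    2*(2*w + (a-1)*w^2) + (c-1)*(2*w + (a-1)*w^2)^2 ≤ 1 →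
    (a-1)*(c-1)*w^2 ≤ 2
lemma fSW_le_left {l s t : ℝ} (hl : 0 < l) (hs0 : 0 ≤ s) (hs1 : s ≤ 1)
    (ht0 : 0 ≤ t) (ht1 : t ≤ 1) : fSW l s t ≤ s := by
  unfold fSW
  nlinarith [mul_nonneg (sub_nonneg.2 ht1) (by nlinarith : (0:ℝ) ≤ s + l*(1-s))]
lemma fSW_le_right {l s t : ℝ} (hl : 0 < l) (hs0 : 0 ≤ s) (hs1 : s ≤ 1)
    (ht0 : 0 ≤ t) (ht1 : t ≤ 1) : fSW l s t ≤ t := by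
  unfold fSW
  nlinarith [mul_nonneg (sub_nonneg.2 hs1) (by nlinarith : (0:ℝ) ≤ t + l*(1-t))]
lemma TSW_nonneg (l u v : ℝ) : 0 ≤ TSW l u v := le_max_left _ _
lemma TSW_le_one {l s t : ℝ} (hl : 0 < l) (hs0 : 0 ≤ s) (hs1 : s ≤ 1)
    (ht0 : 0 ≤ t) (ht1 : t ≤ 1) : TSW l s t ≤ 1 := by
  rw [TSW_eq]
  exact max_le (by norm_num) (le_trans (fSW_le_left hl hs0 hs1 ht0 ht1) hs1)
lemma fSW_mono {c R S x y : ℝ} (hc : 0 < c) (hR0 : 0 ≤ R) (hRx : R ≤ x) (hx1 : x ≤ 1)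
    (hS0 : 0 ≤ S) (hSy : S ≤ y) (hy1 : y ≤ 1) : fSW c R S ≤ fSW c x y := by
  unfold fSW
  nlinarith [mul_nonneg (sub_nonneg.2 hSy) (by nlinarith : (0:ℝ) ≤ (1-c)*x + c),
             mul_nonneg (sub_nonneg.2 hRx) (by nlinarith : (0:ℝ) ≤ (1-c)*S + c)]

lemma sqrt_le_one' {x : ℝ} (h : x ≤ 1) : Real.sqrt x ≤ 1 := by
  rw [show (1:ℝ) = Real.sqrt 1 by simp]
  exact Real.sqrt_le_sqrt h

lemma two_mul_le_add_of_sq_le {m s₁ s₂ : ℝ} (hm : 0 ≤ m) (hs₁ : 0 ≤ s₁) (hs₂ : 0 ≤ s₂)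
    (h : m^2 ≤ s₁*s₂) : 2*m ≤ s₁ + s₂ := by
  have h1 : (2*m)^2 ≤ (s₁+s₂)^2 := by nlinarith [sq_nonneg (s₁ - s₂)]
  have := le_of_pow_le_pow_left₀ (n := 2) (by norm_num) (by linarith : (0:ℝ) ≤ s₁ + s₂) h1
  linarith

/-- the final conversion of the key inequality into the f-inequality -/
lemma main_conv {a c x y u v : ℝ} (hac : a ≤ c)
    (key : (a-1)*(c-1)*((1-x)*(1-y)*(1-u)*(1-v)) ≤ (1-y)*(1-u) + (1-x)*(1-v)) :
    fSW c (fSW a x u) (fSW a y v) ≤ fSW a (fSW c x y) (fSW c u v) := by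
  unfold fSW
  nlinarith [mul_nonneg (sub_nonneg.2 hac) (sub_nonneg.2 key)]

/-- key inequality when a ≤ 1 -/
lemma key_small {a c p q r t : ℝ} (ha : 0 < a) (ha1 : a ≤ 1) (hac : a ≤ c)
    (hp0 : 0 ≤ p) (hp1 : p ≤ 1) (hq0 : 0 ≤ q) (hq1 : q ≤ 1)
    (hr0 : 0 ≤ r) (hr1 : r ≤ 1) (ht0 : 0 ≤ t) (ht1 : t ≤ 1) :
    (a-1)*(c-1)*(p*q*r*t) ≤ q*r + p*t := by
  have hqr : 0 ≤ q*r := mul_nonneg hq0 hr0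
  have hpt : 0 ≤ p*t := mul_nonneg hp0 ht0
  have hpqrt : 0 ≤ p*q*r*t := by positivity
  rcases le_or_gt c 1 with hc1 | hc1
  · have h1 : 0 ≤ (a-1)*(c-1) := by
      nlinarith [mul_nonneg (by linarith : (0:ℝ) ≤ 1-a) (by linarith : (0:ℝ) ≤ 1-c)]
    have h2 : (a-1)*(c-1) ≤ 1 := by nlinarith
    have hpt1 : p*t ≤ 1 := by nlinarith
    have h3 : p*q*r*t ≤ q*r := by nlinarith [mul_le_mul_of_nonneg_left hpt1 hqr]
    nlinarith [mul_le_mul_of_nonneg_right h2 hpqrt]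
  · have h1 : (a-1)*(c-1) ≤ 0 :=
      mul_nonpos_of_nonpos_of_nonneg (by linarith) (by linarith)
    nlinarith [mul_nonpos_of_nonpos_of_nonneg h1 hpqrt]

/-- log-concavity step for ρ(g) = 2g + A g² -/
lemma rho_gm_step {A g₁ g₂ w : ℝ} (hA : 0 ≤ A) (hg₁0 : 0 ≤ g₁) (hg₂0 : 0 ≤ g₂)
    (hw0 : 0 ≤ w) (hw2 : w^2 = g₁*g₂) (hwle : 2*w ≤ g₁ + g₂) :
    (2*w + A*w^2)^2 ≤ (2*g₁ + A*g₁^2)*(2*g₂ + A*g₂^2) := by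
  have E1 : A*(g₁^2*g₂) = A*(w^2*g₁) := by rw [hw2]; ring
  have E2 : A*(g₁*g₂^2) = A*(w^2*g₂) := by rw [hw2]; ring
  have E3 : A^2*((g₁*g₂)*(g₁*g₂)) = A^2*(w^2*w^2) := by rw [hw2]
  have H : 0 ≤ A*(w*w)*(g₁ + g₂ - 2*w) :=
    mul_nonneg (mul_nonneg hA (mul_nonneg hw0 hw0)) (sub_nonneg.2 hwle)
  nlinarith [H, E1, E2, E3, hw2]

/-- final assembly for the large case -/
lemma key_large_final {a c w p q r t : ℝ}
    (happ : (a-1)*(c-1)*w^2 ≤ 2) (hw0 : 0 ≤ w)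
    (hw4 : w^2*w^2 = (p*r)*(q*t)) (hqr : 0 ≤ q*r) (hpt : 0 ≤ p*t) :
    (a-1)*(c-1)*(p*q*r*t) ≤ q*r + p*t := by
  have h2w : 2*(w^2) ≤ q*r + p*t := by
    have := two_mul_le_add_of_sq_le (sq_nonneg w) hqr hpt
      (by nlinarith [hw4] : (w^2)^2 ≤ (q*r)*(p*t))
    linarith
  have e : (a-1)*(c-1)*(p*q*r*t) = ((a-1)*(c-1)*w^2)*(w^2) := by
    linear_combination ((1-a)*(c-1))*hw4
  rw [e]
  calc ((a-1)*(c-1)*w^2)*(w^2) ≤ 2*(w^2) :=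
        mul_le_mul_of_nonneg_right happ (sq_nonneg w)
    _ ≤ q*r + p*t := by linarith

lemma fSW_zero_left {c S : ℝ} (hc : 0 < c) (hS1 : S ≤ 1) : fSW c 0 S ≤ 0 := by
  unfold fSW; nlinarith

lemma fSW_zero_right {c S : ℝ} (hc : 0 < c) (hS1 : S ≤ 1) : fSW c S 0 ≤ 0 := by
  unfold fSW; nlinarith

lemma suff_dom {a c : ℝ} (ha : 0 < a) (hac : a ≤ c) (hpsi : 1 < a → Psi a c) :
    Dominates (TSW a) (TSW c) := by
  have hc : 0 < c := lt_of_lt_of_le ha hac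
  intro x y u v hx hy hu hv
  obtain ⟨hx0, hx1⟩ := hx
  obtain ⟨hy0, hy1⟩ := hy
  obtain ⟨hu0, hu1⟩ := hu
  obtain ⟨hv0, hv1⟩ := hv
  rw [ge_iff_le, TSW_eq c (TSW a x u) (TSW a y v)]
  rcases le_or_gt (fSW c (TSW a x u) (TSW a y v)) 0 with h5 | h5
  · rw [max_eq_left h5]; exact TSW_nonneg _ _ _
  rw [max_eq_right h5.le]
  have hS'0 : 0 ≤ TSW a y v := TSW_nonneg _ _ _
  have hS'1 : TSW a y v ≤ 1 := TSW_le_one ha hy0 hy1 hv0 hv1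
  have hR'0 : 0 ≤ TSW a x u := TSW_nonneg _ _ _
  have hR'1 : TSW a x u ≤ 1 := TSW_le_one ha hx0 hx1 hu0 hu1
  have hfaxu : 0 < fSW a x u := by
    by_contra h
    push_neg at h
    have hR'eq : TSW a x u = 0 := max_eq_left h
    rw [hR'eq] at h5
    linarith [fSW_zero_left hc hS'1]
  have hfayv : 0 < fSW a y v := by
    by_contra h
    push_neg at h
    have hS'eq : TSW a y v = 0 := max_eq_left h
    rw [hS'eq] at h5
    linarith [fSW_zero_right hc hR'1]
  have hR'eq : TSW a x u = fSW a x u := max_eq_right hfaxu.le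
  have hS'eq : TSW a y v = fSW a y v := max_eq_right hfayv.le
  rw [hR'eq, hS'eq] at h5 ⊢
  rw [hR'eq] at hR'0 hR'1
  rw [hS'eq] at hS'0 hS'1
  have hfcxy : 0 < fSW c x y := by
    by_contra h
    push_neg at h
    have hmon : fSW c (fSW a x u) (fSW a y v) ≤ fSW c x y :=
      fSW_mono hc hR'0 (fSW_le_left ha hx0 hx1 hu0 hu1) hx1
        hS'0 (fSW_le_left ha hy0 hy1 hv0 hv1) hy1
    linarith
  have hfcuv : 0 < fSW c u v := by
    by_contra h
    push_neg at h
    have hmon : fSW c (fSW a x u) (fSW a y v) ≤ fSW c u v :=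
      fSW_mono hc hR'0 (fSW_le_right ha hx0 hx1 hu0 hu1) hu1
        hS'0 (fSW_le_right ha hy0 hy1 hv0 hv1) hv1
    linarith
  rw [TSW_eq a (TSW c x y) (TSW c u v), TSW_eq c x y, TSW_eq c u v,
      max_eq_right hfcxy.le, max_eq_right hfcuv.le]
  apply le_trans _ (le_max_right 0 _)
  apply main_conv hac
  -- key inequality
  have hp0 : 0 ≤ 1 - x := by linarith
  have hq0 : 0 ≤ 1 - y := by linarith
  have hr0 : 0 ≤ 1 - u := by linarith
  have ht0 : 0 ≤ 1 - v := by linarith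
  rcases le_or_gt a 1 with ha1 | ha1
  · exact key_small ha ha1 hac hp0 (by linarith) hq0 (by linarith) hr0 (by linarith)
      ht0 (by linarith)
  -- 1 < a
  have hc1 : 1 < c := lt_of_lt_of_le ha1 hac
  have hA : 0 < a - 1 := by linarith
  have hC : 0 < c - 1 := by linarith
  set p := 1 - x with hpdef
  set q := 1 - y with hqdef
  set r := 1 - u with hrdef
  set t := 1 - v with htdef
  have hpqrt : 0 ≤ p*q*r*t :=
    mul_nonneg (mul_nonneg (mul_nonneg hp0 hq0) hr0) ht0
  rcases eq_or_lt_of_le hpqrt with hz | hz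
  · have h0 : (a-1)*(c-1)*(p*q*r*t) = 0 := by rw [← hz]; ring
    rw [h0]
    exact add_nonneg (mul_nonneg hq0 hr0) (mul_nonneg hp0 ht0)
  have hA1 : p + r + (a-1)*(p*r) < 1 := by
    have e : fSW a x u = 1 - (p + r + (a-1)*(p*r)) := by
      unfold fSW; rw [hpdef, hrdef]; ring
    rw [e] at hfaxu; linarith
  have hA2 : q + t + (a-1)*(q*t) < 1 := by
    have e : fSW a y v = 1 - (q + t + (a-1)*(q*t)) := by
      unfold fSW; rw [hqdef, htdef]; ring
    rw [e] at hfayv; linarith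
  set ρ₁ := p + r + (a-1)*(p*r) with hρ₁def
  set ρ₂ := q + t + (a-1)*(q*t) with hρ₂def
  have hρ₁0 : 0 ≤ ρ₁ := by
    have := mul_nonneg hA.le (mul_nonneg hp0 hr0)
    rw [hρ₁def]; linarith
  have hρ₂0 : 0 ≤ ρ₂ := by
    have := mul_nonneg hA.le (mul_nonneg hq0 ht0)
    rw [hρ₂def]; linarith
  have h5' : ρ₁ + ρ₂ + (c-1)*(ρ₁*ρ₂) < 1 := by
    have e : fSW c (fSW a x u) (fSW a y v) = 1 - (ρ₁ + ρ₂ + (c-1)*(ρ₁*ρ₂)) := by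
      unfold fSW; rw [hρ₁def, hρ₂def, hpdef, hqdef, hrdef, htdef]; ring
    rw [e] at h5; linarith
  set g₁ := Real.sqrt (p*r) with hg₁def
  set g₂ := Real.sqrt (q*t) with hg₂def
  have hg₁0 : 0 ≤ g₁ := Real.sqrt_nonneg _
  have hg₂0 : 0 ≤ g₂ := Real.sqrt_nonneg _
  have hg₁2 : g₁^2 = p*r := Real.sq_sqrt (mul_nonneg hp0 hr0)
  have hg₂2 : g₂^2 = q*t := Real.sq_sqrt (mul_nonneg hq0 ht0)
  have hg₁le : 2*g₁ ≤ p + r :=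
    two_mul_le_add_of_sq_le hg₁0 hp0 hr0 (le_of_eq hg₁2)
  have hg₂le : 2*g₂ ≤ q + t :=
    two_mul_le_add_of_sq_le hg₂0 hq0 ht0 (le_of_eq hg₂2)
  set w := Real.sqrt (g₁*g₂) with hwdef
  have hw0 : 0 ≤ w := Real.sqrt_nonneg _
  have hw2 : w^2 = g₁*g₂ := Real.sq_sqrt (mul_nonneg hg₁0 hg₂0)
  have hwle : 2*w ≤ g₁ + g₂ :=
    two_mul_le_add_of_sq_le hw0 hg₁0 hg₂0 (le_of_eq hw2)
  have hg₁1 : g₁ ≤ 1 := by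
    rw [hg₁def]
    exact sqrt_le_one' (mul_le_one₀ (by linarith) hr0 (by linarith))
  have hg₂1 : g₂ ≤ 1 := by
    rw [hg₂def]
    exact sqrt_le_one' (mul_le_one₀ (by linarith) ht0 (by linarith))
  have hw1 : w ≤ 1 := by
    rw [hwdef]
    exact sqrt_le_one' (mul_le_one₀ hg₁1 hg₂0 hg₂1)
  have hρg₁ : 2*g₁ + (a-1)*g₁^2 ≤ ρ₁ := by
    rw [hρ₁def, hg₁2]; linarith
  have hρg₂ : 2*g₂ + (a-1)*g₂^2 ≤ ρ₂ := by
    rw [hρ₂def, hg₂2]; linarith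
  have hρg₂0 : 0 ≤ 2*g₂ + (a-1)*g₂^2 := by
    have := mul_nonneg hA.le (sq_nonneg g₂); linarith
  have hρw0 : 0 ≤ 2*w + (a-1)*w^2 := by
    have := mul_nonneg hA.le (sq_nonneg w); linarith
  have hρwsq : (2*w + (a-1)*w^2)^2 ≤ ρ₁*ρ₂ :=
    le_trans (rho_gm_step hA.le hg₁0 hg₂0 hw0 hw2 hwle)
      (mul_le_mul hρg₁ hρg₂ hρg₂0 hρ₁0)
  have h2ρw : 2*(2*w + (a-1)*w^2) ≤ ρ₁ + ρ₂ :=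
    two_mul_le_add_of_sq_le hρw0 hρ₁0 hρ₂0 hρwsq
  have hK3 : 2*(2*w + (a-1)*w^2) + (c-1)*(2*w + (a-1)*w^2)^2 ≤ 1 := by
    have := mul_le_mul_of_nonneg_left hρwsq hC.le
    linarith
  have happ := hpsi ha1 w hw0 hw1 hK3
  have hw4 : w^2*w^2 = (p*r)*(q*t) := by
    rw [hw2, show g₁*g₂*(g₁*g₂) = g₁^2*g₂^2 by ring, hg₁2, hg₂2]
  exact key_large_final happ hw0 hw4 (mul_nonneg hq0 hr0) (mul_nonneg hp0 ht0)

lemma ord_of_dominates {a b : ℝ} (ha : 0 < a) (hb : 0 < b)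
    (hab : Dominates (TSW a) (TSW b)) : a ≤ b := by
  set r : ℝ := 1 - 1/(2*(2+b)) with hr
  have hd : 0 < 2*(2+b) := by linarith
  have hε0 : 0 < 1/(2*(2+b)) := by positivity
  have hε : 1/(2*(2+b)) * (2*(2+b)) = 1 := by field_simp
  have hε4 : 1/(2*(2+b)) ≤ 1/4 := by
    rw [div_le_div_iff₀ hd (by norm_num)]; linarith
  have hr0 : 0 ≤ r := by rw [hr]; linarith
  have hr1 : r ≤ 1 := by rw [hr]; linarith
  have hfb : 0 < fSW b r r := by
    unfold fSW; rw [hr]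
    set e := 1/(2*(2+b)) with he
    have : (1-b)*(1-e)*(1-e) + b*((1-e)+(1-e)-1) = 1 - 2*e + e^2 - b*e^2 := by ring
    rw [this]
    nlinarith [sq_nonneg e, mul_pos hε0 hε0]
  have h1 : ∀ l : ℝ, 0 < l → TSW l r 1 = r := by
    intro l hl
    rw [TSW_eq]
    have : fSW l r 1 = r := by unfold fSW; ring
    rw [this]; exact max_eq_right hr0
  have h2 : ∀ l : ℝ, 0 < l → TSW l 1 r = r := by
    intro l hl
    rw [TSW_eq]
    have : fSW l 1 r = r := by unfold fSW; ring
    rw [this]; exact max_eq_right hr0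
  have key := hab r 1 1 r ⟨hr0, hr1⟩ ⟨le_refl 0 |>.trans zero_le_one, le_refl 1⟩
      ⟨zero_le_one, le_refl 1⟩ ⟨hr0, hr1⟩
  rw [h1 b hb, h2 b hb, h1 a ha, h2 a ha] at key
  -- key : TSW a r r ≥ TSW b r r
  have hbrr : TSW b r r = fSW b r r := by
    rw [TSW_eq]; exact max_eq_right hfb.le
  rw [hbrr, TSW_eq] at key
  have hfa : fSW a r r ≥ fSW b r r := by
    by_contra h
    push_neg at h
    have : max 0 (fSW a r r) < fSW b r r := max_lt hfb h
    linarith [key]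
  have hid : fSW a r r - fSW b r r = (b - a) * (1-r)^2 := by unfold fSW; ring
  have hrlt : 0 < (1-r)^2 := by
    have : 1 - r = 1/(2*(2+b)) := by rw [hr]; ring
    rw [this]; positivity
  nlinarith [hfa, hid]

lemma psi_mono {a b c : ℝ} (ha : 1 < a) (hab : a ≤ b) (hbc : b < c)
    (hP : Psi b c) : Psi a c := by
  intro w hw0 hw1 hK
  have hA : 0 < a - 1 := by linarith
  have hB : 0 < b - 1 := by linarith
  have hC : 0 < c - 1 := by linarith
  set s : ℝ := Real.sqrt ((a-1)/(b-1)) with hs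
  have hs0 : 0 ≤ s := Real.sqrt_nonneg _
  have hs2 : s^2 = (a-1)/(b-1) := Real.sq_sqrt (by positivity)
  have hs1 : s ≤ 1 := by
    rw [show (1:ℝ) = Real.sqrt 1 by simp [Real.sqrt_one]]
    apply Real.sqrt_le_sqrt
    rw [div_le_one hB]; linarith
  set w₂ : ℝ := s * w with hw2def
  have hw20 : 0 ≤ w₂ := mul_nonneg hs0 hw0
  have hw2w : w₂ ≤ w := by nlinarith
  have hBw2 : (b-1) * w₂^2 = (a-1) * w^2 := by
    have : w₂^2 = s^2 * w^2 := by ring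
    rw [this, hs2]; field_simp
  -- ρ_b(w₂) ≤ ρ_a(w)
  have hρ : 2*w₂ + (b-1)*w₂^2 ≤ 2*w + (a-1)*w^2 := by
    rw [hBw2]; linarith
  have hρ0 : 0 ≤ 2*w₂ + (b-1)*w₂^2 := by positivity
  have hK2 : 2*(2*w₂ + (b-1)*w₂^2) + (c-1)*(2*w₂ + (b-1)*w₂^2)^2 ≤ 1 := by
    have hsqle : (2*w₂ + (b-1)*w₂^2)^2 ≤ (2*w + (a-1)*w^2)^2 := by
      have h0 : 0 ≤ 2*w + (a-1)*w^2 := le_trans hρ0 hρ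
      nlinarith [hρ, hρ0]
    have := mul_le_mul_of_nonneg_left hsqle hC.le
    linarith
  have hfin := hP w₂ hw20 (le_trans hw2w hw1) hK2
  have h2 : (a-1)*(c-1)*w^2 = (b-1)*(c-1)*w₂^2 := by
    linear_combination (1 - c) * hBw2
  linarith

lemma nec_psi {b c : ℝ} (hb : 1 < b) (hbc : b < c)
    (hdom : Dominates (TSW b) (TSW c)) : Psi b c := by
  intro w hw0 hw1 hK
  by_contra hcon
  push_neg at hcon
  have hB : 0 < b - 1 := by linarith
  have hC : 0 < c - 1 := by linarith
  have hBC : 0 < (b-1)*(c-1) := mul_pos hB hC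
  set δ : ℝ := Real.sqrt (2/((b-1)*(c-1))) with hδ
  have hδ0 : 0 ≤ δ := Real.sqrt_nonneg _
  have hδ2 : δ^2 = 2/((b-1)*(c-1)) := Real.sq_sqrt (by positivity)
  have hδ2' : (b-1)*(c-1)*δ^2 = 2 := by rw [hδ2]; field_simp
  have hw2 : δ^2 < w^2 := by nlinarith
  have hδw : δ < w := lt_of_pow_lt_pow_left₀ 2 hw0 hw2
  set w' : ℝ := (δ + w)/2 with hw'
  have hw'0 : 0 < w' := by
    have : 0 < w := lt_of_le_of_lt hδ0 hδw
    rw [hw']; linarith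
  have hw'w : w' < w := by rw [hw']; linarith
  have hw'1 : w' ≤ 1 := by linarith
  have hcon' : 2 < (b-1)*(c-1)*w'^2 := by nlinarith
  -- set up the point
  set ρ' : ℝ := 2*w' + (b-1)*w'^2 with hρ'
  have hρ'0 : 0 < ρ' := by rw [hρ']; nlinarith
  have hρ'w' : w' ≤ ρ' := by rw [hρ']; nlinarith
  have hρlt : 2*ρ' + (c-1)*ρ'^2 < 1 := by
    set ρ : ℝ := 2*w + (b-1)*w^2 with hρdef
    have hww : w'^2 < w^2 := by
      nlinarith [mul_pos (sub_pos.2 hw'w) (by linarith : (0:ℝ) < w + w')]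
    have h1 : ρ' < ρ := by
      rw [hρ', hρdef]
      nlinarith [mul_pos hB (sub_pos.2 hww)]
    have h2 : 0 ≤ ρ := le_trans hρ'0.le h1.le
    have hsq : ρ'^2 < ρ^2 := by nlinarith [hρ'0, h1]
    nlinarith [mul_lt_mul_of_pos_left hsq hC]
  set z : ℝ := 1 - w' with hz
  have hz0 : 0 ≤ z := by rw [hz]; linarith
  have hz1 : z ≤ 1 := by rw [hz]; linarith
  have hPval : fSW c z z = 1 - (2*w' + (c-1)*w'^2) := by unfold fSW; rw [hz]; ring
  have hP0 : 0 < fSW c z z := by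
    rw [hPval]
    have hsq : w'^2 ≤ ρ'^2 := by nlinarith
    nlinarith [mul_le_mul_of_nonneg_left hsq hC.le]
  have hRval : fSW b z z = 1 - ρ' := by unfold fSW; rw [hz, hρ']; ring
  have hR0 : 0 < fSW b z z := by rw [hRval]; nlinarith [mul_nonneg hC.le (sq_nonneg ρ')]
  have key := hdom z z z z ⟨hz0, hz1⟩ ⟨hz0, hz1⟩ ⟨hz0, hz1⟩ ⟨hz0, hz1⟩
  simp only [TSW_eq, max_eq_right hP0.le, max_eq_right hR0.le] at key
  -- key : max 0 (fSW b (fSW c z z) (fSW c z z)) ≥ max 0 (fSW c (fSW b z z) (fSW b z z))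
  have hfcRR : 0 < fSW c (fSW b z z) (fSW b z z) := by
    rw [hRval]
    show (0:ℝ) < (1-c)*(1-ρ')*(1-ρ') + c*((1-ρ')+(1-ρ')-1)
    nlinarith [hρlt]
  simp only [max_eq_right hfcRR.le] at key
  have hmain : fSW b (fSW c z z) (fSW c z z) ≥ fSW c (fSW b z z) (fSW b z z) := by
    by_contra h
    push_neg at h
    have : max 0 (fSW b (fSW c z z) (fSW c z z)) < fSW c (fSW b z z) (fSW b z z) :=
      max_lt hfcRR h
    linarith [key]
  -- identity: LHS - RHS = (c-b)*(2*w'^2 - (b-1)*(c-1)*w'^4)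
  have hid : fSW b (fSW c z z) (fSW c z z) - fSW c (fSW b z z) (fSW b z z)
      = (c-b)*(2*w'^2 - (b-1)*(c-1)*w'^4) := by
    unfold fSW; rw [hz]; ring
  have hcb : 0 < c - b := by linarith
  have h4 : 0 ≤ (c-b)*(2*w'^2 - (b-1)*(c-1)*w'^4) := by
    rw [← hid]; linarith
  have h5 : 0 ≤ 2*w'^2 - (b-1)*(c-1)*w'^4 := by
    rcases le_or_gt 0 (2*w'^2 - (b-1)*(c-1)*w'^4) with h | h
    · exact h
    · nlinarith [mul_pos hcb (neg_pos.2 h)]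
  have h6 : 2*w'^2 < (b-1)*(c-1)*w'^2*w'^2 :=
    by nlinarith [mul_lt_mul_of_pos_right hcon' (mul_pos hw'0 hw'0)]
  nlinarith [h5, h6]

theorem sugeno_weber_dominance_trans (a b c : ℝ) (ha : 0 < a) (hb : 0 < b) (hc : 0 < c)
    (hab : Dominates (TSW a) (TSW b)) (hbc : Dominates (TSW b) (TSW c)) :
    Dominates (TSW a) (TSW c) := by
  have hab' : a ≤ b := ord_of_dominates ha hb hab
  have hbc' : b ≤ c := ord_of_dominates hb hc hbc
  rcases eq_or_lt_of_le hbc' with heq | hblt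
  · subst heq; exact hab
  · apply suff_dom ha (le_trans hab' hblt.le)
    intro ha1
    exact psi_mono ha1 hab' hblt (nec_psi (lt_of_lt_of_le ha1 hab') hblt hbc)
end

section
/- The product t-norm dominates every Sugeno-Weber t-norm: for every real μ ∈ (0,∞) and all x, y, u, v ∈ [0,1], one has T_μ(x,y) · T_μ(u,v) ≥ T_μ(x·u, y·v). -/
open Set

theorem product_dominates_sugeno_weber (m : ℝ) (hm : 0 < m)
    (x y u v : ℝ) (hx : x ∈ Icc (0:ℝ) 1) (hy : y ∈ Icc (0:ℝ) 1)
    (hu : u ∈ Icc (0:ℝ) 1) (hv : v ∈ Icc (0:ℝ) 1) :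
    TSW m x y * TSW m u v ≥ TSW m (x * u) (y * v) := by
  obtain ⟨hx0, hx1⟩ := hx
  obtain ⟨hy0, hy1⟩ := hy
  obtain ⟨hu0, hu1⟩ := hu
  obtain ⟨hv0, hv1⟩ := hv
  have hxu1 : (0:ℝ) ≤ 1 - x * u := by nlinarith
  have hyv1 : (0:ℝ) ≤ 1 - y * v := by nlinarith
  unfold TSW
  rw [ge_iff_le]
  have hAnn : (0:ℝ) ≤ max 0 ((1 - m) * x * y + m * (x + y - 1)) := le_max_left _ _
  have hBnn : (0:ℝ) ≤ max 0 ((1 - m) * u * v + m * (u + v - 1)) := le_max_left _ _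
  refine max_le (mul_nonneg hAnn hBnn) ?_
  rcases le_or_gt ((1 - m) * x * y + m * (x + y - 1)) 0 with hA0 | hA0
  · have hC0 : (1 - m) * (x * u) * (y * v) + m * (x * u + y * v - 1) ≤ 0 := by
      nlinarith [mul_nonneg hx0 hy0, mul_nonneg (mul_nonneg (mul_nonneg hx0 hy0) (sub_nonneg.mpr hu1)) hv0, mul_nonneg (mul_nonneg hx0 hy0) (sub_nonneg.mpr hv1), mul_nonneg (mul_nonneg hx0 (sub_nonneg.mpr hu1)) hm.le, mul_nonneg (mul_nonneg hy0 (sub_nonneg.mpr hv1)) hm.le]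
    exact hC0.trans (mul_nonneg hAnn hBnn)
  rcases le_or_gt ((1 - m) * u * v + m * (u + v - 1)) 0 with hB0 | hB0
  · have hC0 : (1 - m) * (x * u) * (y * v) + m * (x * u + y * v - 1) ≤ 0 := by
      nlinarith [mul_nonneg hu0 hv0, mul_nonneg (mul_nonneg (mul_nonneg hu0 hv0) (sub_nonneg.mpr hx1)) hy0, mul_nonneg (mul_nonneg hu0 hv0) (sub_nonneg.mpr hy1), mul_nonneg (mul_nonneg hu0 (sub_nonneg.mpr hx1)) hm.le, mul_nonneg (mul_nonneg hv0 (sub_nonneg.mpr hy1)) hm.le]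
    exact hC0.trans (mul_nonneg hAnn hBnn)
  rw [max_eq_right hA0.le, max_eq_right hB0.le]
  have p1 : (0:ℝ) ≤ m * ((1-x)*(1-y)*(1-u*v)) := by
    apply mul_nonneg hm.le
    apply mul_nonneg (mul_nonneg (by linarith) (by linarith))
    nlinarith
  have p2 : (0:ℝ) ≤ m * ((1-x)*y*(1-v)) :=
    mul_nonneg hm.le (mul_nonneg (mul_nonneg (by linarith) hy0) (by linarith))
  have p3 : (0:ℝ) ≤ m * (x*(1-u)*(1-y)) :=
    mul_nonneg hm.le (mul_nonneg (mul_nonneg hx0 (by linarith)) (by linarith))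
  have p4 : (0:ℝ) ≤ (m*m) * ((1-x)*(1-y)*(1-u)*(1-v)) :=
    mul_nonneg (mul_nonneg hm.le hm.le)
      (mul_nonneg (mul_nonneg (mul_nonneg (by linarith) (by linarith)) (by linarith)) (by linarith))
  nlinarith [p1, p2, p3, p4]
end

section
/- For every real λ ∈ (0,∞), the map T_λ(u,v) = max(0, (1−λ)uv + λ(u+v−1)) is a t-norm on [0,1]: it maps [0,1]² into [0,1], is commutative, associative, nondecreasing in each argument, and has 1 as neutral element. -/
open Set

private lemma TSW_absorb (l : ℝ) (hl : 0 < l) (y w : ℝ) (hw : w ∈ Icc (0:ℝ) 1) :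
    TSW l (max 0 y) w = max 0 ((1 - l) * y * w + l * (y + w - 1)) := by
  obtain ⟨hw0, hw1⟩ := hw
  rcases le_or_gt 0 y with hy | hy
  · rw [max_eq_right hy]; rfl
  · rw [max_eq_left hy.le]
    unfold TSW
    rw [max_eq_left, max_eq_left]
    · nlinarith [mul_nonneg hw0 (neg_nonneg.2 hy.le),
        mul_nonneg hl.le (mul_nonneg (sub_nonneg.2 hw1) (neg_nonneg.2 hy.le)),
        mul_nonneg hl.le (sub_nonneg.2 hw1)]
    · nlinarith

private lemma TSW_comm (l u v : ℝ) : TSW l u v = TSW l v u := by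
  unfold TSW; ring_nf

theorem sugeno_weber_is_tnorm (l : ℝ) (hl : 0 < l) :
    (∀ u v, u ∈ Icc (0:ℝ) 1 → v ∈ Icc (0:ℝ) 1 → TSW l u v ∈ Icc (0:ℝ) 1) ∧
    (∀ u v, TSW l u v = TSW l v u) ∧
    (∀ u v w, u ∈ Icc (0:ℝ) 1 → v ∈ Icc (0:ℝ) 1 → w ∈ Icc (0:ℝ) 1 →
      TSW l (TSW l u v) w = TSW l u (TSW l v w)) ∧
    (∀ u u' v, u ∈ Icc (0:ℝ) 1 → u' ∈ Icc (0:ℝ) 1 → v ∈ Icc (0:ℝ) 1 →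
      u ≤ u' → TSW l u v ≤ TSW l u' v) ∧
    (∀ u v v', u ∈ Icc (0:ℝ) 1 → v ∈ Icc (0:ℝ) 1 → v' ∈ Icc (0:ℝ) 1 →
      v ≤ v' → TSW l u v ≤ TSW l u v') ∧
    (∀ u, u ∈ Icc (0:ℝ) 1 → TSW l u 1 = u) := by
  refine ⟨?_, fun u v => TSW_comm l u v, ?_, ?_, ?_, ?_⟩
  · rintro u v ⟨hu0, hu1⟩ ⟨hv0, hv1⟩
    constructor
    · exact le_max_left _ _
    · unfold TSW
      rw [max_le_iff]
      constructor
      · linarith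
      · nlinarith [mul_nonneg (sub_nonneg.2 hu1) (sub_nonneg.2 hv1),
          mul_nonneg hu0 hv0]
  · intro u v w hu hv hw
    have h1 : TSW l (TSW l u v) w
        = max 0 ((1-l)*((1-l)*u*v + l*(u+v-1))*w + l*(((1-l)*u*v + l*(u+v-1))+w-1)) :=
      TSW_absorb l hl _ w hw
    have h2 : TSW l u (TSW l v w)
        = max 0 ((1-l)*((1-l)*v*w + l*(v+w-1))*u + l*(((1-l)*v*w + l*(v+w-1))+u-1)) := by
      rw [TSW_comm]; exact TSW_absorb l hl _ u hu
    rw [h1, h2]; ring_nf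
  · rintro u u' v ⟨hu0, hu1⟩ ⟨hu'0, hu'1⟩ ⟨hv0, hv1⟩ huu
    apply max_le_max le_rfl
    nlinarith [mul_nonneg (sub_nonneg.2 huu) hv0,
      mul_nonneg (sub_nonneg.2 huu) (mul_nonneg hl.le (sub_nonneg.2 hv1))]
  · rintro u v v' ⟨hu0, hu1⟩ ⟨hv0, hv1⟩ ⟨hv'0, hv'1⟩ hvv
    apply max_le_max le_rfl
    nlinarith [mul_nonneg (sub_nonneg.2 hvv) hu0,
      mul_nonneg (sub_nonneg.2 hvv) (mul_nonneg hl.le (sub_nonneg.2 hu1))]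
  · rintro u ⟨hu0, hu1⟩
    unfold TSW
    rw [max_eq_right]
    · ring
    · nlinarith
end

section
/- The Sugeno-Weber family is decreasing in its parameter: for all real λ, μ ∈ (0,∞), one has T_λ(u,v) ≥ T_μ(u,v) for all u, v ∈ [0,1] if and only if λ ≤ μ. -/
open Set

theorem sugeno_weber_decreasing_in_parameter (l m : ℝ) (hl : 0 < l) (hm : 0 < m) :
    (∀ u v : ℝ, u ∈ Icc (0:ℝ) 1 → v ∈ Icc (0:ℝ) 1 → TSW l u v ≥ TSW m u v) ↔ l ≤ m := by
  constructor
  · intro h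
    set s : ℝ := Real.sqrt (m + 1) with hs
    have hs0 : 0 < s := Real.sqrt_pos.mpr (by linarith)
    have hs2 : s ^ 2 = m + 1 := Real.sq_sqrt (by linarith)
    set t : ℝ := s / (1 + s) with ht
    have h1s : 0 < 1 + s := by linarith
    have ht0 : 0 ≤ t := by positivity
    have ht1 : t ≤ 1 := by
      rw [ht, div_le_one h1s]; linarith
    have htm : t ∈ Icc (0:ℝ) 1 := ⟨ht0, ht1⟩
    have key := h t t htm htm
    have hone : 1 - t = 1 / (1 + s) := by
      field_simp [ht]
      rw [ht, sub_mul, div_mul_cancel₀ _ h1s.ne']; ring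
    have hB : (1 - m) * t * t + m * (t + t - 1) = 1 / (1 + s) ^ 2 := by
      have : (1 - m) * t * t + m * (t + t - 1) = t * t - m * (1 - t) * (1 - t) := by ring
      rw [this, hone, ht]
      field_simp
      nlinarith [hs2]
    have hBpos : 0 < (1 - m) * t * t + m * (t + t - 1) := by
      rw [hB]; positivity
    have hTm : TSW m t t = (1 - m) * t * t + m * (t + t - 1) := by
      unfold TSW; exact max_eq_right hBpos.le
    rw [hTm] at key
    have hA : (1 - l) * t * t + l * (t + t - 1) ≥ (1 - m) * t * t + m * (t + t - 1) := by
      by_contra hc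
      push_neg at hc
      have : TSW l t t < (1 - m) * t * t + m * (t + t - 1) := max_lt hBpos hc
      linarith
    have h1t : 0 < 1 - t := by rw [hone]; positivity
    by_contra hc
    push_neg at hc
    nlinarith [hA, mul_pos (sub_pos.mpr hc) (mul_pos h1t h1t)]
  · intro hlm u v hu hv
    unfold TSW
    apply max_le_max le_rfl
    nlinarith [hu.1, hu.2, hv.1, hv.2, mul_nonneg (sub_nonneg.mpr hu.2) (sub_nonneg.mpr hv.2)]
end

section
/- The function f(x) = ((1 − 3√x)/(3 − √x))² is involutive on (9, ∞): for every real x > 9, one has f(x) > 9 and f(f(x)) = x. -/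
open Set

/-- The function `f(x) = ((1 - 3√x)/(3 - √x))²`. -/
noncomputable def f (x : ℝ) : ℝ := ((1 - 3 * Real.sqrt x) / (3 - Real.sqrt x)) ^ 2

theorem f_involutive (x : ℝ) (hx : 9 < x) : f x > 9 ∧ f (f x) = x := by
  have hx0 : 0 ≤ x := by linarith
  set s := Real.sqrt x with hsdef
  have hs : 3 < s := by
    have h := Real.sqrt_lt_sqrt (by norm_num : (0:ℝ) ≤ 9) hx
    have h9 : Real.sqrt 9 = 3 := by
      rw [show (9:ℝ) = 3^2 by norm_num, Real.sqrt_sq (by norm_num)]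
    linarith [h, h9 ▸ h]
  have hs3 : (0:ℝ) < s - 3 := by linarith
  have hs3' : s - 3 ≠ 0 := ne_of_gt hs3
  have hsx : s ^ 2 = x := Real.sq_sqrt hx0
  set t := (3*s-1)/(s-3) with htdef
  have ht : f x = t ^ 2 := by
    unfold f; rw [← hsdef, htdef]
    rw [div_pow, div_pow]
    congr 1 <;> ring
  have ht3 : 3 < t := by
    rw [htdef, lt_div_iff₀ hs3]; linarith
  have hft : f x > 9 := by rw [ht]; nlinarith
  refine ⟨hft, ?_⟩
  have hsqrt : Real.sqrt (f x) = t := by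
    rw [ht, Real.sqrt_sq (by linarith)]
  have hkey : (1 - 3*t)/(3 - t) = s := by
    have hnt : (3:ℝ) - t ≠ 0 := by linarith
    rw [htdef] at hnt ⊢
    field_simp
    field_simp at hnt
    rw [div_eq_iff (show (3 * (s - 3) - (3 * s - 1) : ℝ) ≠ 0 by intro h; linarith)]
    ring
  have : f (f x) = ((1 - 3*t)/(3 - t)) ^ 2 := by
    rw [show f (f x) = ((1 - 3 * Real.sqrt (f x)) / (3 - Real.sqrt (f x))) ^ 2 from rfl, hsqrt]
  rw [this, hkey, hsx]
end

section
/- For every real α with 0 < α ≤ 9 and every real β with α ≤ β < ∞, the Sugeno-Weber t-norm T_α dominates the Sugeno-Weber t-norm T_β. -/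
open Set

private lemma two_sqrt_le (c d : ℝ) (hc : 0 ≤ c) (hd : 0 ≤ d) :
    2 * Real.sqrt (c * d) ≤ c + d := by
  have h1 : c * d ≤ ((c + d) / 2) ^ 2 := by nlinarith [sq_nonneg (c - d)]
  have h2 := Real.sqrt_le_sqrt h1
  rw [Real.sqrt_sq (by linarith : (0:ℝ) ≤ (c + d) / 2)] at h2
  linarith

private lemma G_nonneg_low (a b x y u v : ℝ) (ha0 : 0 < a) (hab : a ≤ b) (hb1 : b ≤ 1)
    (hx0 : 0 ≤ x) (hx1 : x ≤ 1) (hy0 : 0 ≤ y) (hy1 : y ≤ 1)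
    (hu0 : 0 ≤ u) (hu1 : u ≤ 1) (hv0 : 0 ≤ v) (hv1 : v ≤ 1) :
    0 ≤ (1 - y) * (1 - u) + (1 - x) * (1 - v)
      - (1 - a) * (1 - b) * ((1 - x) * (1 - y) * (1 - u) * (1 - v)) := by
  have hc0 : (0:ℝ) ≤ (1 - y) * (1 - u) := mul_nonneg (by linarith) (by linarith)
  have hd0 : (0:ℝ) ≤ (1 - x) * (1 - v) := mul_nonneg (by linarith) (by linarith)
  have ha1 : a ≤ 1 := le_trans hab hb1
  have he1 : (1 - a) * (1 - b) ≤ 1 :=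
    mul_le_one₀ (by linarith) (by linarith) (by linarith)
  have hd1 : (1 - x) * (1 - v) ≤ 1 :=
    mul_le_one₀ (by linarith) (by linarith) (by linarith)
  have H1 : 0 ≤ ((1 - y) * (1 - u)) * (1 - (1 - x) * (1 - v)) :=
    mul_nonneg hc0 (by linarith)
  have H2 : 0 ≤ (1 - (1 - a) * (1 - b)) * (((1 - y) * (1 - u)) * ((1 - x) * (1 - v))) :=
    mul_nonneg (by linarith) (mul_nonneg hc0 hd0)
  nlinarith [H1, H2, hd0]

private lemma G_nonneg_mid (a b x y u v : ℝ) (ha1 : a ≤ 1) (hb1 : 1 ≤ b)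
    (hx0 : 0 ≤ x) (hx1 : x ≤ 1) (hy0 : 0 ≤ y) (hy1 : y ≤ 1)
    (hu0 : 0 ≤ u) (hu1 : u ≤ 1) (hv0 : 0 ≤ v) (hv1 : v ≤ 1) :
    0 ≤ (1 - y) * (1 - u) + (1 - x) * (1 - v)
      - (1 - a) * (1 - b) * ((1 - x) * (1 - y) * (1 - u) * (1 - v)) := by
  have hc0 : (0:ℝ) ≤ (1 - y) * (1 - u) := mul_nonneg (by linarith) (by linarith)
  have hd0 : (0:ℝ) ≤ (1 - x) * (1 - v) := mul_nonneg (by linarith) (by linarith)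
  have H1 : 0 ≤ ((1 - a) * (b - 1)) * (((1 - y) * (1 - u)) * ((1 - x) * (1 - v))) :=
    mul_nonneg (mul_nonneg (by linarith) (by linarith)) (mul_nonneg hc0 hd0)
  nlinarith [H1, hc0, hd0]

private lemma G_nonneg_high (a b x y u v P Q : ℝ) (ha1 : 1 < a) (ha9 : a ≤ 9) (hab : a ≤ b)
    (hx0 : 0 ≤ x) (hx1 : x ≤ 1) (hy0 : 0 ≤ y) (hy1 : y ≤ 1)
    (hu0 : 0 ≤ u) (hu1 : u ≤ 1) (hv0 : 0 ≤ v) (hv1 : v ≤ 1)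
    (hP : P = (1 - x) + (1 - u) + (a - 1) * ((1 - x) * (1 - u)))
    (hQ : Q = (1 - y) + (1 - v) + (a - 1) * ((1 - y) * (1 - v)))
    (hlt : b * (P * Q) < 1) :
    0 ≤ (1 - y) * (1 - u) + (1 - x) * (1 - v)
      - (1 - a) * (1 - b) * ((1 - x) * (1 - y) * (1 - u) * (1 - v)) := by
  have hb0 : (0:ℝ) < b := by linarith
  have hb1 : 1 < b := lt_of_lt_of_le ha1 hab
  have hXU : (0:ℝ) ≤ (1 - x) * (1 - u) := mul_nonneg (by linarith) (by linarith)
  have hYV : (0:ℝ) ≤ (1 - y) * (1 - v) := mul_nonneg (by linarith) (by linarith)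
  have hc0 : (0:ℝ) ≤ (1 - y) * (1 - u) := mul_nonneg (by linarith) (by linarith)
  have hd0 : (0:ℝ) ≤ (1 - x) * (1 - v) := mul_nonneg (by linarith) (by linarith)
  set r := Real.sqrt ((1 - x) * (1 - u)) with hrdef
  set m := Real.sqrt ((1 - y) * (1 - v)) with hmdef
  have hr0 : 0 ≤ r := Real.sqrt_nonneg _
  have hm0 : 0 ≤ m := Real.sqrt_nonneg _
  have hr2 : r ^ 2 = (1 - x) * (1 - u) := Real.sq_sqrt hXU
  have hm2 : m ^ 2 = (1 - y) * (1 - v) := Real.sq_sqrt hYV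
  have h2r : 2 * r ≤ (1 - x) + (1 - u) := two_sqrt_le _ _ (by linarith) (by linarith)
  have h2m : 2 * m ≤ (1 - y) + (1 - v) := two_sqrt_le _ _ (by linarith) (by linarith)
  have h2rm : 2 * (r * m) ≤ (1 - y) * (1 - u) + (1 - x) * (1 - v) := by
    have h := two_sqrt_le ((1 - y) * (1 - u)) ((1 - x) * (1 - v)) hc0 hd0
    have he : Real.sqrt ((1 - y) * (1 - u) * ((1 - x) * (1 - v))) = r * m := by
      rw [show (1 - y) * (1 - u) * ((1 - x) * (1 - v))
          = ((1 - x) * (1 - u)) * ((1 - y) * (1 - v)) by ring,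
        Real.sqrt_mul hXU, hrdef, hmdef]
    rw [he] at h
    linarith
  have hA : 2 * r + (a - 1) * r ^ 2 ≤ P := by rw [hP, hr2]; linarith
  have hB : 2 * m + (a - 1) * m ^ 2 ≤ Q := by rw [hQ, hm2]; linarith
  have hBpos : 0 ≤ 2 * m + (a - 1) * m ^ 2 := by
    have := mul_nonneg (by linarith : (0:ℝ) ≤ a - 1) (sq_nonneg m)
    linarith
  have hApos : 0 ≤ 2 * r + (a - 1) * r ^ 2 := by
    have := mul_nonneg (by linarith : (0:ℝ) ≤ a - 1) (sq_nonneg r)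
    linarith
  have hmain : b * ((2 * r + (a - 1) * r ^ 2) * (2 * m + (a - 1) * m ^ 2)) ≤ b * (P * Q) :=
    mul_le_mul_of_nonneg_left (mul_le_mul hA hB hBpos (by linarith)) hb0.le
  have h4brm : 4 * (b * (r * m)) < 1 := by
    have H1 : 0 ≤ (b * (a - 1) * r) * m ^ 2 :=
      mul_nonneg (mul_nonneg (mul_nonneg hb0.le (by linarith)) hr0) (sq_nonneg m)
    have H2 : 0 ≤ (b * (a - 1) * m) * r ^ 2 :=
      mul_nonneg (mul_nonneg (mul_nonneg hb0.le (by linarith)) hm0) (sq_nonneg r)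
    have H3 : 0 ≤ (b * (a - 1) ^ 2 * r ^ 2) * m ^ 2 :=
      mul_nonneg (mul_nonneg (mul_nonneg hb0.le (sq_nonneg _)) (sq_nonneg r)) (sq_nonneg m)
    nlinarith [hmain, hlt, H1, H2, H3]
  rw [show (1 - x) * (1 - y) * (1 - u) * (1 - v) = (r * m) ^ 2 by
    rw [mul_pow, hr2, hm2]; ring]
  have H1 : 0 ≤ (1 - 4 * (b * (r * m))) * (r * m) :=
    mul_nonneg (by linarith) (mul_nonneg hr0 hm0)
  have H2 : 0 ≤ ((9 - a) * (b - 1)) * (r * m) ^ 2 :=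
    mul_nonneg (mul_nonneg (by linarith) (by linarith)) (sq_nonneg _)
  nlinarith [h2rm, sq_nonneg (r * m), H1, H2]

set_option maxHeartbeats 1600000 in
theorem sugeno_weber_dominance_of_small_param (a b : ℝ) (ha0 : 0 < a) (ha9 : a ≤ 9)
    (hab : a ≤ b) : Dominates (TSW a) (TSW b) := by
  intro x y u v hx hy hu hv
  obtain ⟨hx0, hx1⟩ := hx
  obtain ⟨hy0, hy1⟩ := hy
  obtain ⟨hu0, hu1⟩ := hu
  obtain ⟨hv0, hv1⟩ := hv
  have hb0 : (0:ℝ) < b := lt_of_lt_of_le ha0 hab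
  simp only [TSW, ge_iff_le]
  set s0 := (1 - b) * x * y + b * (x + y - 1) with hs0def
  set t0 := (1 - b) * u * v + b * (u + v - 1) with ht0def
  set p0 := (1 - a) * x * u + a * (x + u - 1) with hp0def
  set q0 := (1 - a) * y * v + a * (y + v - 1) with hq0def
  have hXU : (0:ℝ) ≤ (1 - x) * (1 - u) := mul_nonneg (by linarith) (by linarith)
  have hYV : (0:ℝ) ≤ (1 - y) * (1 - v) := mul_nonneg (by linarith) (by linarith)
  have haXU := mul_nonneg ha0.le hXU
  have haYV := mul_nonneg ha0.le hYV
  have hxu1 : x * u ≤ 1 := mul_le_one₀ hx1 hu0 hu1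
  have hyv1 : y * v ≤ 1 := mul_le_one₀ hy1 hv0 hv1
  have hp0le : p0 ≤ x * u := by rw [hp0def]; linarith [haXU]
  have hq0le : q0 ≤ y * v := by rw [hq0def]; linarith [haYV]
  have hp0le1 : p0 ≤ 1 := le_trans hp0le hxu1
  have hq0le1 : q0 ≤ 1 := le_trans hq0le hyv1
  rcases le_or_gt ((1 - b) * max 0 p0 * max 0 q0 + b * (max 0 p0 + max 0 q0 - 1)) 0 with hFB | hFB
  · rw [max_eq_left hFB]
    exact le_max_left _ _
  · -- RHS raw value is positive
    have hp0pos : 0 < p0 := by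
      by_contra h
      push_neg at h
      rw [max_eq_left h] at hFB
      have hq01 : max 0 q0 ≤ 1 := max_le (by norm_num) hq0le1
      have H := mul_nonneg hb0.le (sub_nonneg.mpr hq01)
      linarith [hFB, H]
    have hq0pos : 0 < q0 := by
      by_contra h
      push_neg at h
      rw [max_eq_left h] at hFB
      have hp01 : max 0 p0 ≤ 1 := max_le (by norm_num) hp0le1
      have H := mul_nonneg hb0.le (sub_nonneg.mpr hp01)
      linarith [hFB, H]
    rw [max_eq_right hp0pos.le, max_eq_right hq0pos.le] at hFB ⊢
    -- auxiliary complement bounds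
    have h1pU : u * (1 - x) ≤ 1 - p0 := by rw [hp0def]; linarith [haXU]
    have h1pX : x * (1 - u) ≤ 1 - p0 := by rw [hp0def]; linarith [haXU]
    have h1qV : v * (1 - y) ≤ 1 - q0 := by rw [hq0def]; linarith [haYV]
    have h1qY : y * (1 - v) ≤ 1 - q0 := by rw [hq0def]; linarith [haYV]
    -- positivity of the inner raw values s0, t0
    have hs0pos : 0 < s0 := by
      by_contra h
      push_neg at h
      have hA1 : p0 * q0 ≤ (x * u) * (y * v) :=
        mul_le_mul hp0le hq0le hq0pos.le (mul_nonneg hx0 hu0)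
      have hA2 : (u * (1 - x)) * (v * (1 - y)) ≤ (1 - p0) * (1 - q0) :=
        mul_le_mul h1pU h1qV (mul_nonneg hv0 (by linarith)) (by linarith)
      have hA3 : u * v * s0 ≤ 0 :=
        mul_nonpos_of_nonneg_of_nonpos (mul_nonneg hu0 hv0) h
      rw [hs0def] at hA3
      have hA2b := mul_le_mul_of_nonneg_left hA2 hb0.le
      linarith [hFB, hA1, hA2b, hA3]
    have ht0pos : 0 < t0 := by
      by_contra h
      push_neg at h
      have hA1 : p0 * q0 ≤ (x * u) * (y * v) :=
        mul_le_mul hp0le hq0le hq0pos.le (mul_nonneg hx0 hu0)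
      have hA2 : (x * (1 - u)) * (y * (1 - v)) ≤ (1 - p0) * (1 - q0) :=
        mul_le_mul h1pX h1qY (mul_nonneg hy0 (by linarith)) (by linarith)
      have hA3 : x * y * t0 ≤ 0 :=
        mul_nonpos_of_nonneg_of_nonpos (mul_nonneg hx0 hy0) h
      rw [ht0def] at hA3
      have hA2b := mul_le_mul_of_nonneg_left hA2 hb0.le
      linarith [hFB, hA1, hA2b, hA3]
    rw [max_eq_right hs0pos.le, max_eq_right ht0pos.le]
    -- it suffices to compare raw values
    rw [max_eq_right hFB.le]
    refine le_trans ?_ (le_max_right _ _)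
    -- positivity of G, where  F_a(s0,t0) - F_b(p0,q0) = (b-a) * G
    have hG : 0 ≤ (1 - y) * (1 - u) + (1 - x) * (1 - v)
        - (1 - a) * (1 - b) * ((1 - x) * (1 - y) * (1 - u) * (1 - v)) := by
      rcases le_or_gt a 1 with ha1 | ha1
      · rcases le_or_gt b 1 with hb1 | hb1
        · exact G_nonneg_low a b x y u v ha0 hab hb1 hx0 hx1 hy0 hy1 hu0 hu1 hv0 hv1
        · exact G_nonneg_mid a b x y u v ha1 hb1.le hx0 hx1 hy0 hy1 hu0 hu1 hv0 hv1
      · -- the hard case: 1 < a ≤ 9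
        have hlt1 : b * ((1 - p0) * (1 - q0)) < 1 := by
          have H1 : 0 ≤ (1 - p0) * q0 := mul_nonneg (by linarith) hq0pos.le
          linarith [hFB, H1, hq0le1]
        exact G_nonneg_high a b x y u v (1 - p0) (1 - q0) ha1 ha9 hab
          hx0 hx1 hy0 hy1 hu0 hu1 hv0 hv1
          (by rw [hp0def]; ring) (by rw [hq0def]; ring) hlt1
    have hkey : 0 ≤ (b - a) * ((1 - y) * (1 - u) + (1 - x) * (1 - v)
        - (1 - a) * (1 - b) * ((1 - x) * (1 - y) * (1 - u) * (1 - v))) :=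
      mul_nonneg (by linarith) hG
    have hid : (1 - a) * s0 * t0 + a * (s0 + t0 - 1)
        - ((1 - b) * p0 * q0 + b * (p0 + q0 - 1))
        = (b - a) * ((1 - y) * (1 - u) + (1 - x) * (1 - v)
        - (1 - a) * (1 - b) * ((1 - x) * (1 - y) * (1 - u) * (1 - v))) := by
      rw [hs0def, ht0def, hp0def, hq0def]; ring
    linarith [hkey, hid]
end

section
/- For every real α with 9 < α ≤ 17 + 12√2, setting β_α = f(α) one has β_α ≥ 17 + 12√2 and: (i) for every real γ with α ≤ γ ≤ β_α, the Sugeno-Weber t-norm T_α dominates T_γ; (ii) for every real δ with β_α < δ < ∞, T_α does not dominate T_δ. -/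
set_option maxHeartbeats 1000000

open Set

lemma endgame (a c sc W : ℝ) (ha : 9 < a) (hc : 9 < c) (hsc3 : 3 < sc) (hW : 0 ≤ W)
    (E1 : (c-1)*(W^2+2*W) ≤ (a-1)*(sc-1)) (E2 : (a-1)*(sc-3)^2 ≤ 8*(c-1)) :
    (c-1)*W^2 ≤ 2*(a-1) := by
  obtain ⟨p, hp2, hppos⟩ : ∃ p:ℝ, p^2 = a-1 ∧ 0 < p :=
    ⟨Real.sqrt (a-1), Real.sq_sqrt (by linarith), Real.sqrt_pos.2 (by linarith)⟩
  obtain ⟨q, hq2, hqpos⟩ : ∃ q:ℝ, q^2 = c-1 ∧ 0 < q :=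
    ⟨Real.sqrt (c-1), Real.sq_sqrt (by linarith), Real.sqrt_pos.2 (by linarith)⟩
  obtain ⟨s2, hs22, hs2pos⟩ : ∃ s:ℝ, s^2 = 2 ∧ 0 < s :=
    ⟨Real.sqrt 2, Real.sq_sqrt (by norm_num), Real.sqrt_pos.2 (by norm_num)⟩
  have h1 : p*(sc-3) ≤ 2*s2*q := by
    nlinarith [E2, hp2, hq2, hs22, mul_pos hppos (show (0:ℝ) < sc-3 by linarith),
      mul_pos (mul_pos (show (0:ℝ)<2 by norm_num) hs2pos) hqpos]
  have hsum : q^2*W^2 + 2*q^2*W ≤ 2*p^2 + 2*s2*p*q := by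
    nlinarith [E1, hp2, hq2, mul_le_mul_of_nonneg_left h1 hppos.le]
  have hadd : 0 < q*W + s2*p + 2*q := by positivity
  have h3 : q*W ≤ s2*p := by
    nlinarith [hsum, hadd, hqpos, hs22, mul_nonneg hqpos.le hW, mul_pos hs2pos hppos]
  nlinarith [h3, hq2, hp2, hs22, mul_nonneg hqpos.le hW, mul_pos hs2pos hppos]

lemma exists_geom (X U : ℝ) (hX : 0 ≤ X) (hU : 0 ≤ U) :
    ∃ s, 0 ≤ s ∧ s^2 = X*U ∧ 2*s ≤ X+U := by
  refine ⟨Real.sqrt (X*U), Real.sqrt_nonneg _, Real.sq_sqrt (mul_nonneg hX hU), ?_⟩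
  have h := Real.sqrt_le_sqrt (show X*U ≤ ((X+U)/2)^2 by nlinarith [sq_nonneg (X-U)])
  rw [Real.sqrt_sq (by positivity)] at h
  linarith

lemma amgm2 (s P Q : ℝ) (hs : 0 ≤ s) (hP : 0 ≤ P) (hQ : 0 ≤ Q) (h : P*Q = s^2) :
    2*s ≤ P + Q := by
  nlinarith [sq_nonneg (P-Q), sq_nonneg (P+Q-2*s), h, hs, hP, hQ]

lemma core (a c X Y U V : ℝ) (ha : 9 < a) (hac : a ≤ c)
    (hcond : Real.sqrt a * Real.sqrt c + 1 ≤ 3 * (Real.sqrt a + Real.sqrt c))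
    (hX : 0 ≤ X) (hY : 0 ≤ Y) (hU : 0 ≤ U) (hV : 0 ≤ V)
    (hC : (X+U+(a-1)*X*U) + (Y+V+(a-1)*Y*V)
        + (c-1)*(X+U+(a-1)*X*U)*(Y+V+(a-1)*Y*V) < 1) :
    (a-1)*(c-1)*(X*Y*U*V) ≤ Y*U + X*V := by
  have hc9 : 9 < c := lt_of_lt_of_le ha hac
  have ha1 : (0:ℝ) < a - 1 := by linarith
  have hc1 : (0:ℝ) < c - 1 := by linarith
  obtain ⟨sa, hsaeq, hsa2, hsa3⟩ : ∃ s:ℝ, Real.sqrt a = s ∧ s^2 = a ∧ 3 < s :=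
    ⟨Real.sqrt a, rfl, Real.sq_sqrt (by linarith),
      (Real.lt_sqrt (by norm_num)).2 (by nlinarith)⟩
  obtain ⟨sc, hsceq, hsc2, hsc3⟩ : ∃ s:ℝ, Real.sqrt c = s ∧ s^2 = c ∧ 3 < s :=
    ⟨Real.sqrt c, rfl, Real.sq_sqrt (by linarith),
      (Real.lt_sqrt (by norm_num)).2 (by nlinarith)⟩
  rw [hsaeq, hsceq] at hcond
  have h1 : sa*(sc-3) ≤ 3*sc-1 := by linarith only [hcond]
  have hnn : 0 ≤ sa*(sc-3) := mul_nonneg (by linarith) (by linarith)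
  have h2 : (sa*(sc-3))^2 ≤ (3*sc-1)^2 := pow_le_pow_left₀ hnn h1 2
  have e0 : (sa*(sc-3))^2 = a*(sc-3)^2 := by rw [← hsa2]; ring
  have hcd : (a-1)*(sc-3)^2 ≤ 8*(c-1) := by linarith only [h2, e0, hsc2]
  obtain ⟨sm, hsm0, hsm2, hsmle⟩ := exists_geom X U hX hU
  obtain ⟨sn, hsn0, hsn2, hsnle⟩ := exists_geom Y V hY hV
  have hFm0 : 0 ≤ 2*sm + (a-1)*sm^2 := by positivity
  have hFn0 : 0 ≤ 2*sn + (a-1)*sn^2 := by positivity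
  have em : (a-1)*(X*U) = (a-1)*sm^2 := by rw [hsm2]
  have en : (a-1)*(Y*V) = (a-1)*sn^2 := by rw [hsn2]
  have hAm : 2*sm + (a-1)*sm^2 ≤ X+U+(a-1)*X*U := by linarith only [hsmle, em]
  have hBn : 2*sn + (a-1)*sn^2 ≤ Y+V+(a-1)*Y*V := by linarith only [hsnle, en]
  have hA0 : 0 ≤ X+U+(a-1)*X*U := le_trans hFm0 hAm
  have hB0 : 0 ≤ Y+V+(a-1)*Y*V := le_trans hFn0 hBn
  have hstep1 : (1+(c-1)*(2*sm+(a-1)*sm^2)) * (1+(c-1)*(2*sn+(a-1)*sn^2)) < c := by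
    have e1 : (1+(c-1)*(2*sm+(a-1)*sm^2)) * (1+(c-1)*(2*sn+(a-1)*sn^2))
        ≤ (1+(c-1)*(X+U+(a-1)*X*U)) * (1+(c-1)*(Y+V+(a-1)*Y*V)) := by
      apply mul_le_mul
      · linarith only [mul_le_mul_of_nonneg_left hAm hc1.le]
      · linarith only [mul_le_mul_of_nonneg_left hBn hc1.le]
      · linarith only [mul_nonneg hc1.le hFn0]
      · linarith only [mul_nonneg hc1.le hA0]
    linarith only [e1, mul_lt_mul_of_pos_left hC hc1]
  obtain ⟨g, hg0, hg2, hgle⟩ := exists_geom sm sn hsm0 hsn0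
  have eg : (a-1)*(sm*sn) = (a-1)*g^2 := by rw [hg2]
  have hFsum : 2*(2*g+(a-1)*g^2) ≤ (2*sm+(a-1)*sm^2) + (2*sn+(a-1)*sn^2) := by
    linarith only [hgle, mul_nonneg ha1.le (sq_nonneg (sm-sn)), eg]
  have hid : (2*sm+(a-1)*sm^2) * (2*sn+(a-1)*sn^2) - (2*g+(a-1)*g^2)^2
      = 2*(a-1)*g^2*(sm+sn-2*g) := by
    linear_combination (-4 - (a-1)^2*(g^2+sm*sn) - 2*(a-1)*(sm+sn)) * hg2
  have hFprod : (2*g+(a-1)*g^2)^2 ≤ (2*sm+(a-1)*sm^2) * (2*sn+(a-1)*sn^2) := by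
    linarith only [hid, mul_nonneg (mul_nonneg ha1.le (sq_nonneg g))
      (show (0:ℝ) ≤ sm+sn-2*g by linarith only [hgle])]
  have hsqle : (1+(c-1)*(2*g+(a-1)*g^2))^2
      ≤ (1+(c-1)*(2*sm+(a-1)*sm^2)) * (1+(c-1)*(2*sn+(a-1)*sn^2)) := by
    have t1 := mul_le_mul_of_nonneg_left hFsum hc1.le
    have t2 := mul_le_mul_of_nonneg_left hFprod (sq_nonneg (c-1))
    linarith only [t1, t2]
  have hT : (1+(c-1)*(2*g+(a-1)*g^2))^2 < sc^2 := by
    rw [hsc2]; linarith only [hsqle, hstep1]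
  have hFg0 : 0 ≤ 2*g+(a-1)*g^2 := by positivity
  have h5 : 1 + (c-1)*(2*g+(a-1)*g^2) < sc :=
    lt_of_pow_lt_pow_left₀ 2 (by linarith) hT
  have hE1 : (c-1)*(((a-1)*g)^2+2*((a-1)*g)) ≤ (a-1)*(sc-1) := by
    linarith only [mul_le_mul_of_nonneg_left h5.le ha1.le]
  have hW0 : (0:ℝ) ≤ (a-1)*g := mul_nonneg ha1.le hg0
  have hend := endgame a c sc ((a-1)*g) ha hc9 hsc3 hW0 hE1 hcd
  have h7 : (a-1)*(c-1)*g^2 ≤ 2 := by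
    by_contra h'
    push_neg at h'
    have h'' := mul_lt_mul_of_pos_left h' ha1
    linarith only [h'', hend]
  have hg4 : g^2*g^2 = X*Y*U*V := by
    rw [hg2]; linear_combination sn^2*hsm2 + (X*U)*hsn2
  have hg4' : (a-1)*(c-1)*(X*Y*U*V) = (a-1)*(c-1)*(g^2*g^2) := by rw [hg4]
  have hprodYX : (Y*U)*(X*V) = sm^2*sn^2 := by rw [hsm2, hsn2]; ring
  have hS0 : (0:ℝ) ≤ Y*U + X*V :=
    add_nonneg (mul_nonneg hY hU) (mul_nonneg hX hV)
  have hlast : 2*(sm*sn) ≤ Y*U + X*V :=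
    amgm2 (sm*sn) (Y*U) (X*V) (mul_nonneg hsm0 hsn0) (mul_nonneg hY hU)
      (mul_nonneg hX hV) (by linear_combination (-(sn^2))*hsm2 - (X*U)*hsn2)
  have t3 : 0 ≤ (2 - (a-1)*(c-1)*g^2) * g^2 :=
    mul_nonneg (by linarith only [h7]) (sq_nonneg g)
  linarith only [t3, hg4', hg2, hlast]

lemma TSW_le_one_s13 (l u v : ℝ) (hl : 1 ≤ l) (hu0 : 0 ≤ u) (hu1 : u ≤ 1)
    (hv0 : 0 ≤ v) (hv1 : v ≤ 1) : TSW l u v ≤ 1 := by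
  apply max_le (by norm_num)
  have h1 : 0 ≤ l*(1-u)*(1-v) :=
    mul_nonneg (mul_nonneg (by linarith) (by linarith)) (by linarith)
  have h2 : u*v ≤ 1 := mul_le_one₀ hu1 hv0 hv1
  nlinarith [h1, h2]

lemma part1 (a : ℝ) (ha : 9 < a) (ha' : a ≤ 17 + 12 * Real.sqrt 2) :
    17 + 12 * Real.sqrt 2 ≤ f a := by
  have hs22 : Real.sqrt 2 ^ 2 = 2 := Real.sq_sqrt (by norm_num)
  have hs20 : (0:ℝ) ≤ Real.sqrt 2 := Real.sqrt_nonneg _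
  have hsa2 : Real.sqrt a ^ 2 = a := Real.sq_sqrt (by linarith)
  have hsa3 : 3 < Real.sqrt a := (Real.lt_sqrt (by norm_num)).2 (by nlinarith)
  have hsale : Real.sqrt a ≤ 3 + 2*Real.sqrt 2 := by
    have h1 : a ≤ (3+2*Real.sqrt 2)^2 := by nlinarith [hs22]
    have h2 := Real.sqrt_le_sqrt h1
    rwa [Real.sqrt_sq (by positivity)] at h2
  have hq : (1 - 3*Real.sqrt a)/(3 - Real.sqrt a)
      = (3*Real.sqrt a - 1)/(Real.sqrt a - 3) := by
    rw [show (1 - 3*Real.sqrt a) = -(3*Real.sqrt a - 1) by ring,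
      show (3 - Real.sqrt a) = -(Real.sqrt a - 3) by ring, neg_div_neg_eq]
  have hden : (0:ℝ) < Real.sqrt a - 3 := by linarith
  have hge : 3 + 2*Real.sqrt 2 ≤ (3*Real.sqrt a - 1)/(Real.sqrt a - 3) := by
    rw [le_div_iff₀ hden]
    nlinarith [hsale, hs22, hs20, hsa3]
  show 17 + 12 * Real.sqrt 2 ≤ ((1 - 3 * Real.sqrt a) / (3 - Real.sqrt a)) ^ 2
  rw [hq]
  nlinarith [hge, hs22, hs20]

lemma notdom (a d sd : ℝ) (ha : 9 < a) (had : a < d) (hsd2 : sd^2 = d) (hsd3 : 3 < sd)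
    (hstrict : 8*(d-1) < (a-1)*(sd-3)^2) : ¬ Dominates (TSW a) (TSW d) := by
  have ha1 : (0:ℝ) < a - 1 := by linarith
  have hd9 : 9 < d := by nlinarith [hsd2, hsd3]
  have hd1 : (0:ℝ) < d - 1 := by linarith
  obtain ⟨p, hp2, hp⟩ : ∃ p:ℝ, p^2 = a-1 ∧ 0 < p :=
    ⟨Real.sqrt (a-1), Real.sq_sqrt (by linarith), Real.sqrt_pos.2 (by linarith)⟩
  obtain ⟨q, hq2, hq⟩ : ∃ q:ℝ, q^2 = d-1 ∧ 0 < q :=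
    ⟨Real.sqrt (d-1), Real.sq_sqrt (by linarith), Real.sqrt_pos.2 (by linarith)⟩
  obtain ⟨s2, hs22, hs2⟩ : ∃ s:ℝ, s^2 = 2 ∧ 0 < s :=
    ⟨Real.sqrt 2, Real.sq_sqrt (by norm_num), Real.sqrt_pos.2 (by norm_num)⟩
  have hps : 0 < p*(sd-3) := mul_pos hp (by linarith)
  have h1 : 2*s2*q < p*(sd-3) := by
    nlinarith [hstrict, hp2, hq2, hs22, hps,
      mul_pos (mul_pos (show (0:ℝ)<2 by norm_num) hs2) hq]
  -- the two endpoints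
  obtain ⟨w1, hw1sq, hw1pos⟩ : ∃ w1:ℝ, (1+w1)^2 = 1 + p^2/(1+sd) ∧ 0 < w1 := by
    refine ⟨Real.sqrt (1 + p^2/(1+sd)) - 1, ?_, ?_⟩
    · have : (1 + (Real.sqrt (1 + p^2/(1+sd)) - 1)) = Real.sqrt (1 + p^2/(1+sd)) := by ring
      rw [this, Real.sq_sqrt (by positivity)]
    · have harg : 1 < 1 + p^2/(1+sd) := by
        have := div_pos (pow_pos hp 2) (show (0:ℝ) < 1+sd by linarith)
        linarith
      have h5 : (1:ℝ) < Real.sqrt (1 + p^2/(1+sd)) := by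
        apply (Real.lt_sqrt (by norm_num : (0:ℝ) ≤ 1)).2
        nlinarith only [harg]
      linarith
  set w0 := s2*p/q with hw0def
  have hw0pos : 0 < w0 := by positivity
  have hw0a : q^2*w0^2 = 2*p^2 := by
    rw [hw0def]; field_simp; linear_combination hs22
  have hw0b : q^2*w0 = s2*p*q := by
    rw [hw0def]; field_simp
  have hψ1 : q^2*(w1^2+2*w1) = p^2*(sd-1) := by
    have hne : (1+sd) ≠ 0 := by positivity
    have e : q^2*(w1^2+2*w1) = q^2*((1+w1)^2 - 1) := by ring
    rw [e, hw1sq, show 1 + p^2/(1+sd) - 1 = p^2/(1+sd) by ring,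
      mul_div_assoc', div_eq_iff hne]
    linear_combination p^2*hq2 - p^2*hsd2
  have h2 : q^2*(w0^2+2*w0) < q^2*(w1^2+2*w1) := by
    rw [hψ1]
    have h3 := mul_lt_mul_of_pos_left h1 hp
    linarith only [h3, hw0a, hw0b]
  have hw01 : w0 < w1 := by
    by_contra h'
    push_neg at h'
    have e1 : w1^2+2*w1 ≤ w0^2+2*w0 := by nlinarith only [h', hw1pos]
    have e2 := mul_le_mul_of_nonneg_left e1 (sq_nonneg q)
    linarith [h2, e2]
  set w := (w0+w1)/2 with hwdef
  have hw_pos : 0 < w := by rw [hwdef]; linarith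
  have hw_lt0 : w0 < w := by rw [hwdef]; linarith
  have hw_lt1 : w < w1 := by rw [hwdef]; linarith
  set m := w/(a-1) with hmdef
  have hne1 : a - 1 ≠ 0 := ne_of_gt ha1
  have hma : (a-1)*m = w := by rw [hmdef, mul_comm]; exact div_mul_cancel₀ w hne1
  have hm0 : 0 < m := by rw [hmdef]; exact div_pos hw_pos ha1
  -- m ≤ 1
  have hw1le : w1 ≤ p^2 := by
    have hdivle : p^2/(1+sd) ≤ p^2 := div_le_self (sq_nonneg p) (by linarith)
    have hsq9 : (1+w1)^2 ≤ (1+p^2)^2 := by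
      nlinarith only [hw1sq, hdivle, sq_nonneg (p^2)]
    have := le_of_pow_le_pow_left₀ (by norm_num : (2:ℕ) ≠ 0)
      (by positivity : (0:ℝ) ≤ 1+p^2) hsq9
    linarith
  have hm1 : m ≤ 1 := by
    rw [hmdef, div_le_one ha1]; linarith only [hw_lt1, hw1le, hp2]
  -- key inequalities
  have e1 : q^2*w^2 = (d-1)*(a-1)^2*m^2 := by
    linear_combination w^2*hq2 - (d-1)*(w + (a-1)*m)*hma
  have e2 : q^2*(w^2+2*w) = (d-1)*((a-1)^2*m^2 + 2*(a-1)*m) := by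
    linear_combination (w^2+2*w)*hq2 - (d-1)*(w + (a-1)*m + 2)*hma
  have G1 : 2*p^2 < q^2*w^2 := by
    have e3 : w0^2 < w^2 := by nlinarith only [hw_lt0, hw0pos]
    have := mul_lt_mul_of_pos_left e3 (pow_pos hq 2)
    linarith only [this, hw0a]
  have G2 : q^2*(w^2+2*w) < p^2*(sd-1) := by
    have e3 : w^2+2*w < w1^2+2*w1 := by nlinarith only [hw_lt1, hw_pos]
    calc q^2*(w^2+2*w) < q^2*(w1^2+2*w1) := by
          have := mul_lt_mul_of_pos_left e3 (pow_pos hq 2); linarith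
      _ = p^2*(sd-1) := hψ1
  have K1 : 2 < (a-1)*(d-1)*m^2 := by
    have h4 : 2*(a-1) < (d-1)*(a-1)^2*m^2 := by
      have hp2' : (2:ℝ)*p^2 = 2*(a-1) := by rw [hp2]
      linarith only [G1, e1, hp2']
    nlinarith only [h4, ha1]
  have K2 : (d-1)*(2*m+(a-1)*m^2) < sd-1 := by
    have hp2' : p^2*(sd-1) = (a-1)*(sd-1) := by rw [hp2]
    have h4 : (d-1)*((a-1)^2*m^2 + 2*(a-1)*m) < (a-1)*(sd-1) := by
      linarith only [G2, e2, hp2']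
    nlinarith only [h4, ha1]
  -- the counterexample
  intro hDom
  have hx : (1-m) ∈ Icc (0:ℝ) 1 := ⟨by linarith, by linarith⟩
  have hspec := hDom (1-m) (1-m) (1-m) (1-m) hx hx hx hx
  have hsd1 : sd < d := by nlinarith only [hsd2, hsd3]
  have hF_pos : 0 < 2*m+(a-1)*m^2 := by nlinarith only [hm0, sq_nonneg m, ha1]
  have hF_lt1 : 2*m+(a-1)*m^2 < 1 := by nlinarith only [K2, hd1, hsd1]
  have hPe : TSW a (1-m) (1-m) = 1 - (2*m+(a-1)*m^2) := by
    show max 0 ((1-a)*(1-m)*(1-m) + a*((1-m)+(1-m)-1)) = _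
    rw [show (1-a)*(1-m)*(1-m) + a*((1-m)+(1-m)-1) = 1 - (2*m+(a-1)*m^2) by ring]
    exact max_eq_right (by linarith)
  have hg2' : 2*(2*m+(a-1)*m^2) + (d-1)*(2*m+(a-1)*m^2)^2 < 1 := by
    have t : 1 + (d-1)*(2*m+(a-1)*m^2) < sd := by linarith [K2]
    have tpos : 0 < 1 + (d-1)*(2*m+(a-1)*m^2) := by nlinarith only [hd1, hF_pos]
    have tsq : (1 + (d-1)*(2*m+(a-1)*m^2))^2 < d := by
      nlinarith only [t, tpos, hsd3, hsd2]
    nlinarith only [tsq, hd1]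
  have hRHS : TSW d (TSW a (1-m) (1-m)) (TSW a (1-m) (1-m))
      = 1 - (2*(2*m+(a-1)*m^2) + (d-1)*(2*m+(a-1)*m^2)^2) := by
    rw [hPe]
    show max 0 _ = _
    rw [show (1-d)*(1 - (2*m+(a-1)*m^2))*(1 - (2*m+(a-1)*m^2))
        + d*((1 - (2*m+(a-1)*m^2)) + (1 - (2*m+(a-1)*m^2)) - 1)
        = 1 - (2*(2*m+(a-1)*m^2) + (d-1)*(2*m+(a-1)*m^2)^2) by ring]
    exact max_eq_right (by linarith [hg2'])
  have hRHSpos : 0 < 1 - (2*(2*m+(a-1)*m^2) + (d-1)*(2*m+(a-1)*m^2)^2) := by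
    linarith [hg2']
  have hdiff : 0 < (d-a)*m^2*((a-1)*(d-1)*m^2 - 2) :=
    mul_pos (mul_pos (by linarith) (pow_pos hm0 2)) (by linarith [K1])
  have hL : TSW a (TSW d (1-m) (1-m)) (TSW d (1-m) (1-m))
      < 1 - (2*(2*m+(a-1)*m^2) + (d-1)*(2*m+(a-1)*m^2)^2) := by
    rcases le_or_gt ((1-d)*(1-m)*(1-m) + d*((1-m)+(1-m)-1)) 0 with hr|hr
    · have hR : TSW d (1-m) (1-m) = 0 := max_eq_left hr
      rw [hR]
      show max 0 ((1-a)*0*0 + a*(0+0-1)) < _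
      rw [show (1-a)*0*0 + a*(0+0-1) = -a by ring]
      rw [max_eq_left (by linarith)]
      exact hRHSpos
    · have hR : TSW d (1-m) (1-m) = (1-d)*(1-m)*(1-m) + d*((1-m)+(1-m)-1) :=
        max_eq_right hr.le
      rw [hR]
      apply max_lt hRHSpos
      linarith only [hdiff]
  rw [ge_iff_le, hRHS] at hspec
  linarith [hspec, hL]

lemma bilin_mono (a r s R S : ℝ) (ha : 1 ≤ a) (hrR : r ≤ R) (hsS : s ≤ S)
    (hr1 : r ≤ 1) (hS1 : S ≤ 1) (hS0 : 0 ≤ S) :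
    (1-a)*r*s + a*(r+s-1) ≤ (1-a)*R*S + a*(R+S-1) := by
  have t1 : 0 ≤ (R - r)*((1-a)*S + a) := by
    apply mul_nonneg (by linarith)
    nlinarith only [ha, hS1, hS0]
  have t2 : 0 ≤ (S - s)*((1-a)*r + a) := by
    apply mul_nonneg (by linarith)
    nlinarith only [ha, hr1]
  linarith only [t1, t2]

lemma dominates_of (a c : ℝ) (ha : 9 < a) (hac : a ≤ c)
    (hcond : Real.sqrt a * Real.sqrt c + 1 ≤ 3 * (Real.sqrt a + Real.sqrt c)) :
    Dominates (TSW a) (TSW c) := by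
  intro x y u v hx hy hu hv
  obtain ⟨hx0, hx1⟩ := hx
  obtain ⟨hy0, hy1⟩ := hy
  obtain ⟨hu0, hu1⟩ := hu
  obtain ⟨hv0, hv1⟩ := hv
  have ha1 : (1:ℝ) ≤ a := by linarith
  have hc1' : (1:ℝ) ≤ c := by linarith
  rw [ge_iff_le]
  rcases le_or_gt ((1-c)*(TSW a x u)*(TSW a y v) + c*(TSW a x u + TSW a y v - 1)) 0
    with h|h
  · have h0 : TSW c (TSW a x u) (TSW a y v) = 0 := max_eq_left h
    rw [h0]; exact TSW_nonneg _ _ _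
  · have hP0 : 0 ≤ TSW a x u := TSW_nonneg _ _ _
    have hQ0 : 0 ≤ TSW a y v := TSW_nonneg _ _ _
    have hP1 : TSW a x u ≤ 1 := TSW_le_one_s13 a x u ha1 hx0 hx1 hu0 hu1
    have hQ1 : TSW a y v ≤ 1 := TSW_le_one_s13 a y v ha1 hy0 hy1 hv0 hv1
    have hPpos : 0 < TSW a x u := by
      rcases hP0.lt_or_eq with h'|h'
      · exact h'
      · exfalso; rw [← h'] at h; nlinarith only [h, hQ1, hc1']
    have hQpos : 0 < TSW a y v := by
      rcases hQ0.lt_or_eq with h'|h'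
      · exact h'
      · exfalso; rw [← h'] at h; nlinarith only [h, hP1, hc1']
    have hpa : 0 < (1-a)*x*u + a*(x+u-1) := by
      by_contra h'
      push_neg at h'
      have hz : TSW a x u = 0 := max_eq_left h'
      rw [hz] at hPpos; exact lt_irrefl _ hPpos
    have hqa : 0 < (1-a)*y*v + a*(y+v-1) := by
      by_contra h'
      push_neg at h'
      have hz : TSW a y v = 0 := max_eq_left h'
      rw [hz] at hQpos; exact lt_irrefl _ hQpos
    have hPe : TSW a x u = (1-a)*x*u + a*(x+u-1) := max_eq_right hpa.le
    have hQe : TSW a y v = (1-a)*y*v + a*(y+v-1) := max_eq_right hqa.le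
    rw [hPe, hQe] at h
    have hkey := core a c (1-x) (1-y) (1-u) (1-v) ha hac hcond
      (by linarith) (by linarith) (by linarith) (by linarith) (by linarith only [h])
    -- bounds for monotonicity
    have hr_le : (1-c)*x*y + c*(x+y-1) ≤ TSW c x y := le_max_right _ _
    have hs_le : (1-c)*u*v + c*(u+v-1) ≤ TSW c u v := le_max_right _ _
    have hS1 : TSW c u v ≤ 1 := TSW_le_one_s13 c u v hc1' hu0 hu1 hv0 hv1
    have hS0 : 0 ≤ TSW c u v := TSW_nonneg _ _ _
    have hr1 : (1-c)*x*y + c*(x+y-1) ≤ 1 := by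
      have hh1 : 0 ≤ c*(1-x)*(1-y) :=
        mul_nonneg (mul_nonneg (by linarith) (by linarith)) (by linarith)
      have hh2 : x*y ≤ 1 := mul_le_one₀ hx1 hy0 hy1
      nlinarith only [hh1, hh2]
    have mono := bilin_mono a ((1-c)*x*y + c*(x+y-1)) ((1-c)*u*v + c*(u+v-1))
      (TSW c x y) (TSW c u v) ha1 hr_le hs_le hr1 hS1 hS0
    have hd := mul_nonneg (show (0:ℝ) ≤ c - a by linarith) (sub_nonneg.2 hkey)
    have hfin : (1-c)*((1-a)*x*u + a*(x+u-1))*((1-a)*y*v + a*(y+v-1))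
          + c*(((1-a)*x*u + a*(x+u-1)) + ((1-a)*y*v + a*(y+v-1)) - 1)
        ≤ (1-a)*((1-c)*x*y + c*(x+y-1))*((1-c)*u*v + c*(u+v-1))
          + a*(((1-c)*x*y + c*(x+y-1)) + ((1-c)*u*v + c*(u+v-1)) - 1) := by
      linarith only [hd]
    rw [hPe, hQe]
    have hLe : TSW c ((1-a)*x*u + a*(x+u-1)) ((1-a)*y*v + a*(y+v-1))
        = (1-c)*((1-a)*x*u + a*(x+u-1))*((1-a)*y*v + a*(y+v-1))
          + c*(((1-a)*x*u + a*(x+u-1)) + ((1-a)*y*v + a*(y+v-1)) - 1) :=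
      max_eq_right h.le
    rw [hLe]
    exact le_trans (le_trans hfin mono) (le_max_right _ _)

theorem sugeno_weber_dominance_interval (a : ℝ) (ha : 9 < a)
    (ha' : a ≤ 17 + 12 * Real.sqrt 2) :
    17 + 12 * Real.sqrt 2 ≤ f a ∧
    (∀ c : ℝ, a ≤ c → c ≤ f a → Dominates (TSW a) (TSW c)) ∧
    (∀ d : ℝ, f a < d → ¬ Dominates (TSW a) (TSW d)) := by
  have hs20 : (0:ℝ) ≤ Real.sqrt 2 := Real.sqrt_nonneg _
  have hsa2 : Real.sqrt a ^ 2 = a := Real.sq_sqrt (by linarith)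
  have hsa3 : 3 < Real.sqrt a := (Real.lt_sqrt (by norm_num)).2 (by nlinarith)
  have hden : (0:ℝ) < Real.sqrt a - 3 := by linarith
  have hfa : f a = ((3*Real.sqrt a - 1)/(Real.sqrt a - 3))^2 := by
    show ((1 - 3 * Real.sqrt a) / (3 - Real.sqrt a)) ^ 2 = _
    rw [show (1 - 3*Real.sqrt a) = -(3*Real.sqrt a - 1) by ring,
      show (3 - Real.sqrt a) = -(Real.sqrt a - 3) by ring, neg_div_neg_eq]
  have hrpos : 0 ≤ (3*Real.sqrt a - 1)/(Real.sqrt a - 3) :=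
    div_nonneg (by linarith) (by linarith)
  have hrmul : (3*Real.sqrt a - 1)/(Real.sqrt a - 3) * (Real.sqrt a - 3)
      = 3*Real.sqrt a - 1 := div_mul_cancel₀ _ (ne_of_gt hden)
  have hP1 := part1 a ha ha'
  refine ⟨hP1, ?_, ?_⟩
  · intro c hc1 hc2
    apply dominates_of a c ha hc1
    have hc0 : (0:ℝ) ≤ c := by linarith
    have hsc : Real.sqrt c ≤ (3*Real.sqrt a - 1)/(Real.sqrt a - 3) := by
      have h1 : Real.sqrt c ≤ Real.sqrt (((3*Real.sqrt a - 1)/(Real.sqrt a - 3))^2) :=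
        Real.sqrt_le_sqrt (by rw [← hfa]; exact hc2)
      rwa [Real.sqrt_sq hrpos] at h1
    have h2 := mul_le_mul_of_nonneg_right hsc hden.le
    rw [hrmul] at h2
    linarith [h2]
  · intro d hd
    have hd9 : (9:ℝ) < d := by linarith [hP1, hs20]
    have had : a < d := by linarith [hP1]
    have hsd2 : Real.sqrt d ^ 2 = d := Real.sq_sqrt (by linarith)
    have hsd3 : 3 < Real.sqrt d := (Real.lt_sqrt (by norm_num)).2 (by nlinarith)
    apply notdom a d (Real.sqrt d) ha had hsd2 hsd3
    -- strict inequality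
    have hrd : (3*Real.sqrt a - 1)/(Real.sqrt a - 3) < Real.sqrt d := by
      apply lt_of_pow_lt_pow_left₀ 2 (Real.sqrt_nonneg d)
      rw [hsd2, ← hfa]; exact hd
    have h3 : 3*Real.sqrt a - 1 < Real.sqrt d * (Real.sqrt a - 3) := by
      have := mul_lt_mul_of_pos_right hrd hden
      rwa [hrmul] at this
    have h4 : 3*Real.sqrt d - 1 < Real.sqrt a * (Real.sqrt d - 3) := by
      nlinarith only [h3]
    have h5 : 0 < 3*Real.sqrt d - 1 := by linarith
    have h6 : (3*Real.sqrt d - 1)^2 < (Real.sqrt a * (Real.sqrt d - 3))^2 := by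
      nlinarith only [h4, h5]
    nlinarith only [h6, hsa2, hsd2, hsd3]
end

section
/- For all real α₁, α₂ with 17 + 12√2 ≤ α₁ < ∞ and 17 + 12√2 ≤ α₂ < ∞, if the Sugeno-Weber t-norm T_{α₁} dominates T_{α₂}, then α₁ = α₂. -/
open Set

lemma sw_dom_le (a₁ a₂ : ℝ) (h₁ : (1:ℝ) ≤ a₁)
    (hdom : Dominates (TSW a₁) (TSW a₂)) : a₁ ≤ a₂ := by
  set r := Real.sqrt a₁ with hr_def
  have hr0 : 0 ≤ r := Real.sqrt_nonneg _
  have hr2 : r ^ 2 = a₁ := Real.sq_sqrt (by linarith)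
  set t := r / (1 + r) with ht_def
  have h1r : (0:ℝ) < 1 + r := by linarith
  have ht0 : 0 ≤ t := div_nonneg hr0 (le_of_lt h1r)
  have ht1 : t ≤ 1 := by
    rw [ht_def, div_le_one h1r]; linarith
  have htr : t * (1 + r) = r := div_mul_cancel₀ r (ne_of_gt h1r)
  have hmem : t ∈ Icc (0:ℝ) 1 := ⟨ht0, ht1⟩
  have h1mem : (1:ℝ) ∈ Icc (0:ℝ) 1 := ⟨by norm_num, le_refl 1⟩
  have hd := hdom t 1 1 t hmem h1mem h1mem hmem
  simp only [TSW] at hd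
  have e1 : (1 - a₂) * t * 1 + a₂ * (t + 1 - 1) = t := by ring
  have e2 : (1 - a₂) * 1 * t + a₂ * (1 + t - 1) = t := by ring
  have e3 : (1 - a₁) * t * 1 + a₁ * (t + 1 - 1) = t := by ring
  have e4 : (1 - a₁) * 1 * t + a₁ * (1 + t - 1) = t := by ring
  rw [e1, e2, e3, e4, max_eq_right ht0] at hd
  have htr' : t = r * (1 - t) := by nlinarith [htr]
  have hA1 : (1 - a₁) * t * t + a₁ * (t + t - 1) = 0 := by
    linear_combination (t + r*(1-t)) * htr' + (1-t)^2 * hr2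
  rw [hA1, max_self] at hd
  have hle : (1 - a₂) * t * t + a₂ * (t + t - 1) ≤ 0 :=
    le_trans (le_max_right _ _) hd
  have h1t : (0:ℝ) < 1 - t := by
    rw [ht_def, sub_pos, div_lt_one h1r]; linarith
  nlinarith [hle, hA1, mul_pos h1t h1t]

set_option maxHeartbeats 4000000 in
lemma sw_no_dom (a₁ a₂ : ℝ) (h₁ : 17 + 12 * Real.sqrt 2 ≤ a₁) (hlt : a₁ < a₂)
    (hdom : Dominates (TSW a₁) (TSW a₂)) : False := by
  obtain ⟨w, hw2, hw0, hw12⟩ : ∃ w : ℝ, w ^ 2 = 2 ∧ 0 ≤ w ∧ 17 + 12 * w ≤ a₁ :=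
    ⟨Real.sqrt 2, Real.sq_sqrt (by norm_num), Real.sqrt_nonneg _, h₁⟩
  have hw1 : 1 < w := by nlinarith
  have hw15 : w < 3 / 2 := by nlinarith
  have ha1 : (29:ℝ) < a₁ := by nlinarith
  have ha2 : (29:ℝ) < a₂ := lt_trans ha1 hlt
  obtain ⟨m, hm2, hm0⟩ : ∃ m : ℝ, m ^ 2 = a₂ ∧ 0 ≤ m :=
    ⟨Real.sqrt a₂, Real.sq_sqrt (by linarith), Real.sqrt_nonneg _⟩
  have hm3 : 3 + 2 * w < m := by
    nlinarith [sq_nonneg (m - 3 - 2*w), sq_nonneg (m + 3 + 2*w)]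
  obtain ⟨p, hp2, hp0⟩ : ∃ p : ℝ, p ^ 2 = a₁ - 1 ∧ 0 < p :=
    ⟨Real.sqrt (a₁ - 1), Real.sq_sqrt (by linarith), Real.sqrt_pos.mpr (by linarith)⟩
  obtain ⟨q, hq2, hq0⟩ : ∃ q : ℝ, q ^ 2 = a₂ - 1 ∧ 0 < q :=
    ⟨Real.sqrt (a₂ - 1), Real.sq_sqrt (by linarith), Real.sqrt_pos.mpr (by linarith)⟩
  have hpq0 : 0 < p * q := mul_pos hp0 hq0
  -- key quadratic inequality: 8(m²−1) < (a₁−1)(m−3)²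
  have key8 : 8 * (m ^ 2 - 1) < (a₁ - 1) * (m - 3) ^ 2 := by
    have hfac : 0 < (m - 3 - 2*w) * ((2 + 3*w) * m - 6 - 5*w) := by
      apply mul_pos
      · linarith
      · nlinarith
    nlinarith [hfac, sq_nonneg (m - 3), hw2]
  -- hence 2wq < p(m−3)
  have h2q : 2 * w * q < p * (m - 3) := by
    have hsq : (2 * w * q) ^ 2 < (p * (m - 3)) ^ 2 := by
      have e1 : (2*w*q)^2 = 8 * (m^2 - 1) := by
        rw [mul_pow, mul_pow, hw2, hq2]; nlinarith [hm2]
      have e2 : (p * (m-3))^2 = (a₁ - 1) * (m - 3)^2 := by rw [mul_pow, hp2]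
      rw [e1, e2]; exact key8
    have hpm : 0 ≤ p * (m - 3) := mul_nonneg hp0.le (by nlinarith)
    exact lt_of_pow_lt_pow_left₀ 2 hpm hsq
  obtain ⟨s₀, hs₀pq, hs₀0⟩ : ∃ s : ℝ, s * (p * q) = w ∧ 0 < s :=
    ⟨w / (p * q), div_mul_cancel₀ _ (ne_of_gt hpq0), div_pos (by linarith) hpq0⟩
  obtain ⟨g₀, hg₀_def⟩ : ∃ g : ℝ, g = (1 + m) * s₀ * (2 + (a₁ - 1) * s₀) := ⟨_, rfl⟩
  have hg₀0 : 0 < g₀ := by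
    rw [hg₀_def]
    apply mul_pos (mul_pos (by linarith) hs₀0)
    have h' : 0 < (a₁ - 1) * s₀ := mul_pos (by linarith) hs₀0
    linarith
  have hg₀1 : g₀ < 1 := by
    have hid : g₀ * (p * q ^ 2) = (1 + m) * w * (2 * q + w * p) := by
      rw [hg₀_def]
      linear_combination ((1+m)*(2*q + p*(s₀*p*q + w))) * hs₀pq -
        ((1+m)*s₀^2*p*q^2) * hp2
    have hlt2 : (1 + m) * w * (2 * q + w * p) < 1 * (p * q ^ 2) := by
      have hre : (1 + m) * w * (2 * q + w * p)
          = 1 * (p * q ^ 2) - (1 + m) * (p * (m - 3) - 2 * w * q) := by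
        linear_combination (-p) * hq2 + p * hm2 + p * (1 + m) * hw2
      have hpos : 0 < (1 + m) * (p * (m - 3) - 2 * w * q) :=
        mul_pos (by linarith) (sub_pos.mpr h2q)
      linarith [hre, hpos]
    rw [← hid] at hlt2
    have hpq20 : (0:ℝ) < p * q ^ 2 := by positivity
    exact lt_of_mul_lt_mul_right (by linarith) hpq20.le
  -- choose θ with 1 < θ and θ² g₀ < 1
  obtain ⟨θ, hθ1, hθ2g1⟩ : ∃ θ : ℝ, 1 < θ ∧ θ ^ 2 * g₀ < 1 := by
    refine ⟨Real.sqrt (Real.sqrt (1 / g₀)), ?_, ?_⟩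
    · have h1g : 1 < 1 / g₀ := (one_lt_div hg₀0).mpr hg₀1
      have h1s : 1 < Real.sqrt (1 / g₀) := by
        have := Real.sqrt_lt_sqrt (by norm_num) h1g
        rwa [Real.sqrt_one] at this
      have := Real.sqrt_lt_sqrt (by norm_num) h1s
      rwa [Real.sqrt_one] at this
    · rw [Real.sq_sqrt (Real.sqrt_nonneg _)]
      have h1g : 1 < 1 / g₀ := (one_lt_div hg₀0).mpr hg₀1
      have hzz : Real.sqrt (1 / g₀) ^ 2 = 1 / g₀ := Real.sq_sqrt (by positivity)
      have h1s : 1 < Real.sqrt (1 / g₀) := by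
        have := Real.sqrt_lt_sqrt (by norm_num) h1g
        rwa [Real.sqrt_one] at this
      have hlt3 : Real.sqrt (1 / g₀) < 1 / g₀ := by nlinarith [h1s, hzz]
      calc Real.sqrt (1 / g₀) * g₀ < (1 / g₀) * g₀ :=
            mul_lt_mul_of_pos_right hlt3 hg₀0
        _ = 1 := by field_simp
  obtain ⟨s, hs_def⟩ : ∃ s : ℝ, s = θ * s₀ := ⟨_, rfl⟩
  have hs_pos : 0 < s := by rw [hs_def]; exact mul_pos (by linarith) hs₀0
  have hbb : (1 + m) * s * (2 + (a₁ - 1) * s) < 1 := by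
    have hbb' : θ ^ 2 * g₀ - (1 + m) * s * (2 + (a₁ - 1) * s)
        = 2 * (1 + m) * (θ * s₀) * (θ - 1) := by
      rw [hs_def, hg₀_def]; ring
    linarith [hbb', hθ2g1, mul_pos (mul_pos (mul_pos (show (0:ℝ) < 2*(1+m) by linarith) (show (0:ℝ) < θ by linarith)) hs₀0) (sub_pos.mpr hθ1)]
  have hs2 : 2 < (a₁ - 1) * (a₂ - 1) * s ^ 2 := by
    have he : (a₁ - 1) * (a₂ - 1) * s ^ 2 = θ ^ 2 * w ^ 2 := by
      rw [hs_def, ← hp2, ← hq2]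
      linear_combination (θ ^ 2 * (s₀ * p * q + w)) * hs₀pq
    rw [he, hw2]
    have hθ2 : 1 < θ ^ 2 := by nlinarith [hθ1]
    linarith
  have hs_half : 2 * (1 + m) * s < 1 := by
    linarith [hbb, mul_pos (mul_pos (show (0:ℝ) < 1 + m by linarith) hs_pos)
      (mul_pos (show (0:ℝ) < a₁ - 1 by linarith) hs_pos)]
  -- the witness point x = 1 - s
  obtain ⟨B, hB⟩ : ∃ B : ℝ, B = (1 - s) ^ 2 - a₂ * s ^ 2 := ⟨_, rfl⟩
  obtain ⟨A, hA⟩ : ∃ A : ℝ, A = (1 - s) ^ 2 - a₁ * s ^ 2 := ⟨_, rfl⟩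
  have hsm1 : (1 + m) * s < 1 := by
    linarith [hs_half, mul_pos (show (0:ℝ) < 1 + m by linarith) hs_pos]
  have hB0 : 0 ≤ B := by
    rw [hB, ← hm2]
    have e : (1 - s) ^ 2 - m ^ 2 * s ^ 2 = (1 - (1 + m) * s) * (1 - s + m * s) := by ring
    have h2 : (0:ℝ) < 1 - s + m * s := by
      have := mul_nonneg hm0 hs_pos.le
      have hs1 : s < 1 := by linarith [hs_half, mul_nonneg hm0 hs_pos.le, hs_pos]
      linarith
    linarith [e, mul_pos (show (0:ℝ) < 1 - (1 + m) * s by linarith) h2]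
  have hAB : B ≤ A := by
    rw [hA, hB]
    have : 0 ≤ (a₂ - a₁) * s ^ 2 := mul_nonneg (by linarith) (sq_nonneg s)
    linarith
  have hA0 : 0 ≤ A := le_trans hB0 hAB
  have hDA : 0 < A ^ 2 - a₂ * (1 - A) ^ 2 := by
    have hE : 1 - A = s * (2 + (a₁ - 1) * s) := by rw [hA]; ring
    have h1A : (1 + m) * (1 - A) < 1 := by
      rw [hE]
      linarith [hbb, show (1+m)*(s*(2+(a₁-1)*s)) = (1+m)*s*(2+(a₁-1)*s) from by ring]
    have hmE : m * (1 - A) < A := by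
      have e : (1 + m) * (1 - A) = (1 - A) + m * (1 - A) := by ring
      linarith [h1A, e]
    have hmE0 : 0 ≤ m * (1 - A) := by
      rw [hE]
      exact mul_nonneg hm0 (mul_nonneg hs_pos.le
        (by linarith [mul_pos (show (0:ℝ) < a₁ - 1 by linarith) hs_pos]))
    have hprod : 0 < (A - m * (1 - A)) * (A + m * (1 - A)) :=
      mul_pos (by linarith) (by linarith)
    have e2 : A ^ 2 - a₂ * (1 - A) ^ 2 = (A - m * (1 - A)) * (A + m * (1 - A)) := by
      rw [← hm2]; ring
    linarith [hprod, e2]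
  have hkey : B ^ 2 - a₁ * (1 - B) ^ 2 < A ^ 2 - a₂ * (1 - A) ^ 2 := by
    have hdiff : (B ^ 2 - a₁ * (1 - B) ^ 2) - (A ^ 2 - a₂ * (1 - A) ^ 2)
        = -((a₂ - a₁) * s ^ 2 * ((a₁ - 1) * (a₂ - 1) * s ^ 2 - 2)) := by
      rw [hA, hB]; ring
    linarith [hdiff, mul_pos (mul_pos (sub_pos.mpr hlt) (pow_pos hs_pos 2))
      (sub_pos.mpr hs2)]
  -- apply dominance at (1-s, 1-s, 1-s, 1-s)
  have hx : (1 - s) ∈ Icc (0:ℝ) 1 :=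
    ⟨by linarith [hs_half, mul_nonneg hm0 hs_pos.le], by linarith⟩
  have hd := hdom (1-s) (1-s) (1-s) (1-s) hx hx hx hx
  have hTB : TSW a₂ (1-s) (1-s) = B := by
    unfold TSW
    rw [show (1 - a₂) * (1-s) * (1-s) + a₂ * ((1-s) + (1-s) - 1) = B from by rw [hB]; ring]
    exact max_eq_right hB0
  have hTA : TSW a₁ (1-s) (1-s) = A := by
    unfold TSW
    rw [show (1 - a₁) * (1-s) * (1-s) + a₁ * ((1-s) + (1-s) - 1) = A from by rw [hA]; ring]
    exact max_eq_right hA0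
  rw [hTB, hTA] at hd
  have hTBB : TSW a₁ B B = max 0 (B ^ 2 - a₁ * (1 - B) ^ 2) := by
    unfold TSW
    rw [show (1 - a₁) * B * B + a₁ * (B + B - 1) = B ^ 2 - a₁ * (1 - B) ^ 2 from by ring]
  have hTAA : TSW a₂ A A = A ^ 2 - a₂ * (1 - A) ^ 2 := by
    unfold TSW
    rw [show (1 - a₂) * A * A + a₂ * (A + A - 1) = A ^ 2 - a₂ * (1 - A) ^ 2 from by ring]
    exact max_eq_right hDA.le
  rw [hTBB, hTAA] at hd
  have hmax : max 0 (B ^ 2 - a₁ * (1 - B) ^ 2) < A ^ 2 - a₂ * (1 - A) ^ 2 :=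
    max_lt hDA hkey
  linarith [hd, hmax]

theorem sugeno_weber_no_dominance_of_large_params (a₁ a₂ : ℝ)
    (h₁ : 17 + 12 * Real.sqrt 2 ≤ a₁) (h₂ : 17 + 12 * Real.sqrt 2 ≤ a₂)
    (hdom : Dominates (TSW a₁) (TSW a₂)) : a₁ = a₂ := by
  have hs2 : (1:ℝ) ≤ 17 + 12 * Real.sqrt 2 := by
    nlinarith [Real.sqrt_nonneg 2]
  have hle : a₁ ≤ a₂ := sw_dom_le a₁ a₂ (le_trans hs2 h₁) hdom
  rcases eq_or_lt_of_le hle with h | h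
  · exact h
  · exact absurd (sw_no_dom a₁ a₂ h₁ h hdom) not_false
end

section
/- Let 0 < λ < μ < ∞ and 0 < x < 1, 0 < y < 1, 0 < u < 1, 0 < v < 1 be real numbers, and set X₁ = (1−λ)ux + λ(u+x−1), X₂ = (1−λ)vy + λ(v+y−1), X₃ = (1−μ)uv + μ(u+v−1), X₄ = (1−μ)xy + μ(x+y−1). If (1−μ)X₁X₂ + μ(X₁+X₂−1) > 0, then X₁ > 0, X₂ > 0, X₃ > 0 and X₄ > 0. -/
set_option maxHeartbeats 1000000 in
theorem Xi_pos_of_B_pos (l m x y u v X₁ X₂ X₃ X₄ : ℝ)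
    (hl : 0 < l) (hlm : l < m)
    (hx : 0 < x) (hx1 : x < 1) (hy : 0 < y) (hy1 : y < 1)
    (hu : 0 < u) (hu1 : u < 1) (hv : 0 < v) (hv1 : v < 1)
    (hX₁ : X₁ = (1 - l) * u * x + l * (u + x - 1))
    (hX₂ : X₂ = (1 - l) * v * y + l * (v + y - 1))
    (hX₃ : X₃ = (1 - m) * u * v + m * (u + v - 1))
    (hX₄ : X₄ = (1 - m) * x * y + m * (x + y - 1))
    (hB : (1 - m) * X₁ * X₂ + m * (X₁ + X₂ - 1) > 0) :
    X₁ > 0 ∧ X₂ > 0 ∧ X₃ > 0 ∧ X₄ > 0 := by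
  have hm : 0 < m := hl.trans hlm
  have ha : 0 < (1 - u) * (1 - x) := mul_pos (by linarith) (by linarith)
  have hb : 0 < (1 - v) * (1 - y) := mul_pos (by linarith) (by linarith)
  have hc : 0 < (1 - u) * (1 - v) := mul_pos (by linarith) (by linarith)
  have hd : 0 < (1 - x) * (1 - y) := mul_pos (by linarith) (by linarith)
  have e1 : X₁ = u * x - l * ((1 - u) * (1 - x)) := by rw [hX₁]; ring
  have e2 : X₂ = v * y - l * ((1 - v) * (1 - y)) := by rw [hX₂]; ring
  have e3 : X₃ = u * v - m * ((1 - u) * (1 - v)) := by rw [hX₃]; ring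
  have e4 : X₄ = x * y - m * ((1 - x) * (1 - y)) := by rw [hX₄]; ring
  have h1lt : X₁ < 1 := by nlinarith [mul_pos hl ha]
  have h2lt : X₂ < 1 := by nlinarith [mul_pos hl hb]
  have hB' : m * ((1 - X₁) * (1 - X₂)) < X₁ * X₂ := by
    have h : (1 - m) * X₁ * X₂ + m * (X₁ + X₂ - 1)
        = X₁ * X₂ - m * ((1 - X₁) * (1 - X₂)) := by ring
    linarith [h ▸ hB]
  -- X₁ > 0 and X₂ > 0
  have hX1pos : 0 < X₁ := by
    by_contra h
    push_neg at h
    rcases le_or_gt X₂ 0 with h2 | h2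
    · -- both nonpositive: contradiction
      have k1 : -X₁ ≤ l * ((1 - u) * (1 - x)) := by nlinarith [mul_pos hu hx]
      have k2 : -X₂ ≤ l * ((1 - v) * (1 - y)) := by nlinarith [mul_pos hv hy]
      have k3 : (1 + l) * ((1 - u) * (1 - x)) < 1 - X₁ := by
        rw [e1]
        nlinarith [mul_pos hu (by linarith : (0:ℝ) < 1 - x),
          mul_pos hx (by linarith : (0:ℝ) < 1 - u)]
      have k4 : (1 + l) * ((1 - v) * (1 - y)) < 1 - X₂ := by
        rw [e2]
        nlinarith [mul_pos hv (by linarith : (0:ℝ) < 1 - y),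
          mul_pos hy (by linarith : (0:ℝ) < 1 - v)]
      have hq1 : (-X₁) * (-X₂) ≤ (l * ((1 - u) * (1 - x))) * (l * ((1 - v) * (1 - y))) :=
        mul_le_mul k1 k2 (by linarith) (by positivity)
      have hq2 : ((1 + l) * ((1 - u) * (1 - x))) * ((1 + l) * ((1 - v) * (1 - y)))
          < (1 - X₁) * (1 - X₂) :=
        mul_lt_mul'' k3 k4 (by positivity) (by positivity)
      have hll : l * l < m * ((1 + l) * (1 + l)) := by nlinarith
      have hab : 0 < ((1 - u) * (1 - x)) * ((1 - v) * (1 - y)) := mul_pos ha hb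
      linarith [hq1, mul_lt_mul_of_pos_left hq2 hm, mul_lt_mul_of_pos_right hll hab, hB']
    · have hxy : X₁ * X₂ ≤ 0 := mul_nonpos_of_nonpos_of_nonneg h h2.le
      have : 0 < (1 - X₁) * (1 - X₂) := mul_pos (by linarith) (by linarith)
      nlinarith
  have hX2pos : 0 < X₂ := by
    by_contra h
    push_neg at h
    have hxy : X₁ * X₂ ≤ 0 := mul_nonpos_of_nonneg_of_nonpos hX1pos.le h
    have : 0 < (1 - X₁) * (1 - X₂) := mul_pos (by linarith) (by linarith)
    nlinarith
  -- key inequality: m * (1 - ux)(1 - vy) < ux * vy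
  have hux1 : u * x < 1 := by nlinarith
  have hvy1 : v * y < 1 := by nlinarith
  have q1 : X₁ * (1 - u * x) < (u * x) * (1 - X₁) := by nlinarith [mul_pos hl ha]
  have q2 : X₂ * (1 - v * y) < (v * y) * (1 - X₂) := by nlinarith [mul_pos hl hb]
  have q12 : (X₁ * (1 - u * x)) * (X₂ * (1 - v * y))
      < ((u * x) * (1 - X₁)) * ((v * y) * (1 - X₂)) :=
    mul_lt_mul'' q1 q2
      (mul_nonneg hX1pos.le (by linarith)) (mul_nonneg hX2pos.le (by linarith))
  have hP : 0 < (1 - X₁) * (1 - X₂) := mul_pos (by linarith) (by linarith)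
  have hQ : 0 < (1 - u * x) * (1 - v * y) := mul_pos (by linarith) (by linarith)
  have r1 : m * ((1 - u * x) * (1 - v * y)) < (u * x) * (v * y) := by
    have h5 := mul_lt_mul_of_pos_right hB' hQ
    nlinarith [q12, hP, h5]
  have t1 : 1 - u < 1 - u * x := by linarith [mul_pos hu (by linarith : (0:ℝ) < 1 - x)]
  have t2 : 1 - v < 1 - v * y := by linarith [mul_pos hv (by linarith : (0:ℝ) < 1 - y)]
  have t1' : 1 - x < 1 - u * x := by linarith [mul_pos hx (by linarith : (0:ℝ) < 1 - u)]
  have t2' : 1 - y < 1 - v * y := by linarith [mul_pos hy (by linarith : (0:ℝ) < 1 - v)]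
  have hxy1 : x * y < 1 := by linarith [mul_lt_mul_of_pos_right hx1 hy]
  have huv1 : u * v < 1 := by linarith [mul_lt_mul_of_pos_right hu1 hv]
  -- X₃ > 0
  have s1 : (1 - u) * (1 - v) * (x * y) < (1 - u * x) * (1 - v * y) := by
    have t3 : (1 - u) * (1 - v) < (1 - u * x) * (1 - v * y) :=
      mul_lt_mul'' t1 t2 (by linarith) (by linarith)
    have t4 := mul_lt_mul_of_pos_left hxy1 hc
    linarith [t3, t4]
  have hX3pos : 0 < X₃ := by
    have key3 : m * ((1 - u) * (1 - v)) < u * v := by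
      by_contra hcon
      push_neg at hcon
      have h6 := mul_le_mul_of_nonneg_right hcon (le_of_lt (mul_pos hx hy))
      linarith [mul_lt_mul_of_pos_left s1 hm, r1, h6]
    rw [e3]; linarith [key3]
  -- X₄ > 0
  have s2 : (1 - x) * (1 - y) * (u * v) < (1 - u * x) * (1 - v * y) := by
    have t3 : (1 - x) * (1 - y) < (1 - u * x) * (1 - v * y) :=
      mul_lt_mul'' t1' t2' (by linarith) (by linarith)
    have t4 := mul_lt_mul_of_pos_left huv1 hd
    linarith [t3, t4]
  have hX4pos : 0 < X₄ := by
    have key4 : m * ((1 - x) * (1 - y)) < x * y := by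
      by_contra hcon
      push_neg at hcon
      have h6 := mul_le_mul_of_nonneg_right hcon (le_of_lt (mul_pos hu hv))
      linarith [mul_lt_mul_of_pos_left s2 hm, r1, h6]
    rw [e4]; linarith [key4]
  exact ⟨hX1pos, hX2pos, hX3pos, hX4pos⟩
end

section
/- Let λ, μ, x, y, u, ṽ be real numbers with 0 < λ < 1, λ < μ, 0 < x < 1, 0 < y < 1, 0 < u < 1, and y < ṽ < 1 + λy. Then ṽ·x·(1 − (λ−1)(μ−1)uy) + y·((λ−1)uy((μ−1)x + 1) + u − x) ≥ 0. -/
theorem second_inequality_of_small_lambda (l m x y u w : ℝ)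
    (hl : 0 < l) (hl1 : l < 1) (hlm : l < m)
    (hx : 0 < x) (hx1 : x < 1) (hy : 0 < y) (hy1 : y < 1)
    (hu : 0 < u) (hu1 : u < 1) (hw : y < w) (hw1 : w < 1 + l * y) :
    w * x * (1 - (l - 1) * (m - 1) * u * y)
      + y * ((l - 1) * u * y * ((m - 1) * x + 1) + u - x) ≥ 0 := by
  rcases le_or_gt 0 (1 - (l - 1) * (m - 1) * u * y) with h | h
  · nlinarith [mul_pos hy hu,
      mul_nonneg (sub_pos.mpr hw).le (mul_nonneg hx.le h),
      mul_pos (mul_pos hy hu) hy, mul_pos (mul_pos hy hu) (mul_pos hy (sub_pos.mpr hl1))]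
  · have hm : m < 1 := by nlinarith [mul_pos hu hy, mul_pos (mul_pos hu hy) (sub_pos.mpr hl1)]
    have h2 : 0 < 1 - (1 - l) * (1 - m) * x := by
      nlinarith [mul_pos (mul_pos (sub_pos.mpr hl1) (sub_pos.mpr hm)) hx,
        mul_pos (sub_pos.mpr hl1) (sub_pos.mpr hm)]
    have h3 : 0 < x * (1 - (l - 1) * (m - 1) * u * y) + u * y := by
      nlinarith [mul_pos (mul_pos hu hy) h2]
    have h4 : 0 < 1 - (1 - l) * y := by nlinarith
    nlinarith [mul_pos h4 h3,
      mul_pos (sub_pos.mpr hw1) (mul_pos hx (by linarith : (0:ℝ) < (l - 1) * (m - 1) * u * y - 1))]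
end

section
/- Let 0 < λ < μ < ∞ be real numbers. Then the Sugeno-Weber t-norm T_λ dominates the Sugeno-Weber t-norm T_μ if and only if for all real numbers x, y, u, ṽ with 0 < x < 1, 0 < y < 1, 0 < u < 1 and y < ṽ < 1 + λy, at least one of the following two inequalities holds: u((λ−1)x + 1)((μ−1)ṽ + 1) + (μ−1)ṽx + ṽ + x − 1 ≥ 0, or ṽx(1 − (λ−1)(μ−1)uy) + y((λ−1)uy((μ−1)x + 1) + u − x) ≥ 0. -/
open Set

/-- Polynomial core of the Sugeno-Weber t-norm. -/
def Fsw (t a b : ℝ) : ℝ := a * b - t * (1 - a) * (1 - b)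

lemma TSW_eq_s18 (t a b : ℝ) : TSW t a b = max 0 (Fsw t a b) := by
  unfold TSW Fsw; congr 1; ring

lemma Fsw_comm (t a b : ℝ) : Fsw t a b = Fsw t b a := by unfold Fsw; ring

lemma Fsw_ge_neg {t a b : ℝ} (ht : 0 ≤ t) (ha : 0 ≤ a) (ha1 : a ≤ 1) (hb : 0 ≤ b) (hb1 : b ≤ 1) :
    -t ≤ Fsw t a b := by
  unfold Fsw
  nlinarith [mul_nonneg ha hb, mul_nonneg ha (sub_nonneg.2 hb1),
    mul_nonneg ht (by nlinarith [mul_nonneg ha (sub_nonneg.2 hb1)] : (0:ℝ) ≤ a + b - a * b)]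

lemma Fsw_zero_left {t b : ℝ} (ht : 0 ≤ t) (hb : b ≤ 1) : Fsw t 0 b ≤ 0 := by
  unfold Fsw; nlinarith

lemma Fsw_zero_right {t a : ℝ} (ht : 0 ≤ t) (ha : a ≤ 1) : Fsw t a 0 ≤ 0 := by
  unfold Fsw; nlinarith

lemma Fsw_le_one {t a b : ℝ} (ht : 0 ≤ t) (ha : 0 ≤ a) (ha1 : a ≤ 1) (hb : 0 ≤ b) (hb1 : b ≤ 1) :
    Fsw t a b ≤ 1 := by
  unfold Fsw
  nlinarith [mul_nonneg (mul_nonneg ht (sub_nonneg.2 ha1)) (sub_nonneg.2 hb1),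
    mul_nonneg ha (sub_nonneg.2 hb1), mul_nonneg ha hb]

lemma id1 (l m x u w : ℝ) :
    u * ((l - 1) * x + 1) * ((m - 1) * w + 1) + (m - 1) * w * x + w + x - 1
      = -(Fsw m (Fsw l (1 - x) (1 - u)) (1 - w)) := by
  unfold Fsw; ring

lemma id_d (l y w v K : ℝ) (hK : K = 1 + (l - 1) * y) (hv : K * v = 1 - w + l * y) :
    Fsw l (1 - y) v = 1 - w := by
  unfold Fsw; subst hK; linear_combination hv

lemma id2 (l m x y u w v K : ℝ) (hK : K = 1 + (l - 1) * y) (hv : K * v = 1 - w + l * y) :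
    K * (Fsw l (Fsw m (1 - x) (1 - y)) (Fsw m (1 - u) v)
          - Fsw m (Fsw l (1 - x) (1 - u)) (Fsw l (1 - y) v))
      = (m - l) * (w * x * (1 - (l - 1) * (m - 1) * u * y)
           + y * ((l - 1) * u * y * ((m - 1) * x + 1) + u - x)) := by
  unfold Fsw; subst hK
  linear_combination ((l - m)*x + (m - l - m^2 + l*m^2 + l^2 - l^2*m)*x*y*u) * hv

lemma pos_of_R_pos {l m c d : ℝ} (hl : 0 < l) (hlm : l < m)
    (hc : -l ≤ c) (hd : -l ≤ d) (hc1 : c ≤ 1) (hd1 : d ≤ 1)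
    (hR : 0 < Fsw m c d) : 0 < c ∧ 0 < d := by
  unfold Fsw at hR
  have hm : 0 < m := hl.trans hlm
  constructor
  · by_contra h; push_neg at h
    rcases le_or_gt 0 d with hd0 | hd0
    · nlinarith [mul_nonneg (sub_nonneg.2 hc1) (sub_nonneg.2 hd1), mul_nonneg (neg_nonneg.2 h) hd0]
    · nlinarith [mul_nonneg (by linarith : (0:ℝ) ≤ l + c) (by linarith : (0:ℝ) ≤ -d),
        mul_pos (sub_pos.2 hlm) (neg_pos.2 hd0),
        mul_nonneg (mul_nonneg hm.le (neg_nonneg.2 h)) (by linarith : (0:ℝ) ≤ -d)]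
  · by_contra h; push_neg at h
    rcases le_or_gt 0 c with hc0 | hc0
    · nlinarith [mul_nonneg (sub_nonneg.2 hc1) (sub_nonneg.2 hd1), mul_nonneg hc0 (neg_nonneg.2 h)]
    · nlinarith [mul_nonneg (by linarith : (0:ℝ) ≤ l + d) (by linarith : (0:ℝ) ≤ -c),
        mul_pos (sub_pos.2 hlm) (neg_pos.2 hc0),
        mul_nonneg (mul_nonneg hm.le (neg_nonneg.2 h)) (by linarith : (0:ℝ) ≤ -c)]

lemma chainPb {l m X Y U V : ℝ} (hl : 0 < l) (hm : 0 < m)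
    (hX : X ∈ Icc (0:ℝ) 1) (hY : Y ∈ Icc (0:ℝ) 1) (hU : U ∈ Icc (0:ℝ) 1) (hV : V ∈ Icc (0:ℝ) 1)
    (hc : 0 < Fsw l X U) (hd : 0 < Fsw l Y V) (hPb : Fsw m U V ≤ 0) :
    Fsw m (Fsw l X U) (Fsw l Y V) ≤ 0 := by
  obtain ⟨hX0, hX1⟩ := hX; obtain ⟨hY0, hY1⟩ := hY
  obtain ⟨hU0, hU1⟩ := hU; obtain ⟨hV0, hV1⟩ := hV
  set c := Fsw l X U with hcdef
  set d := Fsw l Y V with hddef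
  have hcXU : c ≤ X * U := by
    rw [hcdef]; unfold Fsw
    nlinarith [mul_nonneg (mul_nonneg hl.le (by linarith : (0:ℝ) ≤ 1 - X)) (by linarith : (0:ℝ) ≤ 1 - U)]
  have hdYV : d ≤ Y * V := by
    rw [hddef]; unfold Fsw
    nlinarith [mul_nonneg (mul_nonneg hl.le (by linarith : (0:ℝ) ≤ 1 - Y)) (by linarith : (0:ℝ) ≤ 1 - V)]
  have h1 : c * d ≤ (X * U) * (Y * V) :=
    mul_le_mul hcXU hdYV hd.le (by positivity)
  have hPb' : U * V ≤ m * ((1 - U) * (1 - V)) := by unfold Fsw at hPb; nlinarith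
  have h2 : (X * U) * (Y * V) ≤ (m * ((1 - U) * (1 - V))) * (X * Y) := by
    have := mul_le_mul_of_nonneg_left hPb' (by positivity : (0:ℝ) ≤ X * Y)
    nlinarith
  have h3 : X * (1 - U) ≤ 1 - c := by
    rw [hcdef]; unfold Fsw
    nlinarith [mul_nonneg (mul_nonneg hl.le (by linarith : (0:ℝ) ≤ 1 - X)) (by linarith : (0:ℝ) ≤ 1 - U)]
  have h4 : Y * (1 - V) ≤ 1 - d := by
    rw [hddef]; unfold Fsw
    nlinarith [mul_nonneg (mul_nonneg hl.le (by linarith : (0:ℝ) ≤ 1 - Y)) (by linarith : (0:ℝ) ≤ 1 - V)]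
  have hc1 : c ≤ 1 := le_trans hcXU (by nlinarith)
  have h5 : (X * (1 - U)) * (Y * (1 - V)) ≤ (1 - c) * (1 - d) :=
    mul_le_mul h3 h4 (mul_nonneg hY0 (by linarith)) (by linarith)
  have h6 : m * ((X * (1 - U)) * (Y * (1 - V))) ≤ m * ((1 - c) * (1 - d)) :=
    mul_le_mul_of_nonneg_left h5 hm.le
  show Fsw m c d ≤ 0
  unfold Fsw
  nlinarith

lemma TSW_cont {f g : ℝ → ℝ} (t : ℝ) (hf : Continuous f) (hg : Continuous g) :
    Continuous (fun s => TSW t (f s) (g s)) := by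
  unfold TSW
  exact continuous_const.max (by fun_prop)

lemma extend_Icc {f : ℝ → ℝ} (hf : Continuous f) (h : ∀ t ∈ Ioo (0:ℝ) 1, 0 ≤ f t) :
    ∀ t ∈ Icc (0:ℝ) 1, 0 ≤ f t := by
  intro t ht
  have hcl : Icc (0:ℝ) 1 = closure (Ioo (0:ℝ) 1) := (closure_Ioo one_ne_zero.symm).symm
  exact closure_minimal h (isClosed_le continuous_const hf) (hcl ▸ ht)

theorem sugeno_weber_dominance_iff_reduced (l m : ℝ) (hl : 0 < l) (hlm : l < m) :
    Dominates (TSW l) (TSW m) ↔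
      ∀ x y u w : ℝ, 0 < x → x < 1 → 0 < y → y < 1 → 0 < u → u < 1 →
        y < w → w < 1 + l * y →
        (u * ((l - 1) * x + 1) * ((m - 1) * w + 1) + (m - 1) * w * x + w + x - 1 ≥ 0 ∨
         w * x * (1 - (l - 1) * (m - 1) * u * y)
           + y * ((l - 1) * u * y * ((m - 1) * x + 1) + u - x) ≥ 0) := by
  have hm : 0 < m := hl.trans hlm
  constructor
  · -- Dominance → reduced condition
    intro hdom x y u w hx0 hx1 hy0 hy1 hu0 hu1 hyw hw
    by_contra hcon
    push_neg at hcon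
    obtain ⟨h1, h2⟩ := hcon
    have hK : 0 < 1 + (l - 1) * y := by nlinarith
    obtain ⟨V, hv, hV0, hV1⟩ : ∃ V : ℝ, (1 + (l - 1) * y) * V = 1 - w + l * y ∧ 0 < V ∧ V < 1 :=
      ⟨(1 - w + l * y) / (1 + (l - 1) * y), by field_simp,
        div_pos (by linarith) hK, by rw [div_lt_one hK]; linarith⟩
    have hly : l * y < l := by nlinarith
    -- identities
    have hd : Fsw l (1 - y) V = 1 - w := id_d l y w V _ rfl hv
    have hRpos : 0 < Fsw m (Fsw l (1 - x) (1 - u)) (Fsw l (1 - y) V) := by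
      rw [hd]
      have := id1 l m x u w
      linarith
    -- bounds needed for positivity of c and d
    have hcb : -l ≤ Fsw l (1 - x) (1 - u) :=
      Fsw_ge_neg hl.le (by linarith) (by linarith) (by linarith) (by linarith)
    have hdb : -l ≤ Fsw l (1 - y) V := by rw [hd]; linarith
    have hc1 : Fsw l (1 - x) (1 - u) ≤ 1 :=
      Fsw_le_one hl.le (by linarith) (by linarith) (by linarith) (by linarith)
    have hd1 : Fsw l (1 - y) V ≤ 1 := by rw [hd]; linarith
    obtain ⟨hcpos, hdpos⟩ := pos_of_R_pos hl hlm hcb hdb hc1 hd1 hRpos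
    -- apply dominance
    have hdom' := hdom (1 - x) (1 - y) (1 - u) V ⟨by linarith, by linarith⟩
      ⟨by linarith, by linarith⟩ ⟨by linarith, by linarith⟩ ⟨hV0.le, hV1.le⟩
    have hRHS : TSW m (TSW l (1 - x) (1 - u)) (TSW l (1 - y) V)
        = Fsw m (Fsw l (1 - x) (1 - u)) (Fsw l (1 - y) V) := by
      rw [TSW_eq_s18 l (1 - x) (1 - u), TSW_eq_s18 l (1 - y) V, max_eq_right hcpos.le,
        max_eq_right hdpos.le, TSW_eq_s18 m, max_eq_right hRpos.le]
    rw [hRHS] at hdom'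
    have hPa1 : Fsw m (1 - x) (1 - y) ≤ 1 :=
      Fsw_le_one hm.le (by linarith) (by linarith) (by linarith) (by linarith)
    have hPb1 : Fsw m (1 - u) V ≤ 1 :=
      Fsw_le_one hm.le (by linarith) (by linarith) hV0.le hV1.le
    have hLHS : TSW l (TSW m (1 - x) (1 - y)) (TSW m (1 - u) V)
        = max 0 (Fsw l (max 0 (Fsw m (1 - x) (1 - y))) (max 0 (Fsw m (1 - u) V))) := by
      rw [TSW_eq_s18 m (1 - x) (1 - y), TSW_eq_s18 m (1 - u) V, TSW_eq_s18 l]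
    rw [hLHS] at hdom'
    have hge : Fsw l (max 0 (Fsw m (1 - x) (1 - y))) (max 0 (Fsw m (1 - u) V))
        ≥ Fsw m (Fsw l (1 - x) (1 - u)) (Fsw l (1 - y) V) := by
      rcases le_max_iff.1 hdom' with h | h
      · linarith
      · exact h
    rcases le_or_gt (Fsw m (1 - x) (1 - y)) 0 with hPa0 | hPa0
    · rw [max_eq_left hPa0] at hge
      have hz : Fsw l 0 (max 0 (Fsw m (1 - u) V)) ≤ 0 :=
        Fsw_zero_left hl.le (max_le (by norm_num) hPb1)
      linarith
    rcases le_or_gt (Fsw m (1 - u) V) 0 with hPb0 | hPb0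
    · rw [max_eq_left hPb0] at hge
      have hz : Fsw l (max 0 (Fsw m (1 - x) (1 - y))) 0 ≤ 0 :=
        Fsw_zero_right hl.le (max_le (by norm_num) hPa1)
      linarith
    rw [max_eq_right hPa0.le, max_eq_right hPb0.le] at hge
    -- use identity 2 to contradict h2
    have hid2 := id2 l m x y u w V _ rfl hv
    have hL : 0 ≤ (1 + (l - 1) * y) * (Fsw l (Fsw m (1 - x) (1 - y)) (Fsw m (1 - u) V)
        - Fsw m (Fsw l (1 - x) (1 - u)) (Fsw l (1 - y) V)) :=
      mul_nonneg hK.le (by linarith)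
    have hRneg : (m - l) * (w * x * (1 - (l - 1) * (m - 1) * u * y)
        + y * ((l - 1) * u * y * ((m - 1) * x + 1) + u - x)) < 0 :=
      mul_neg_of_pos_of_neg (by linarith) h2
    linarith
  · -- reduced condition → Dominance
    intro hC
    have hopen : ∀ X Y U V : ℝ, X ∈ Ioo (0:ℝ) 1 → Y ∈ Ioo (0:ℝ) 1 → U ∈ Ioo (0:ℝ) 1 →
        V ∈ Ioo (0:ℝ) 1 → TSW l (TSW m X Y) (TSW m U V) ≥ TSW m (TSW l X U) (TSW l Y V) := by
      intro X Y U V hX hY hU hV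
      obtain ⟨hX0, hX1⟩ := hX; obtain ⟨hY0, hY1⟩ := hY
      obtain ⟨hU0, hU1⟩ := hU; obtain ⟨hV0, hV1⟩ := hV
      have hLHS0 : 0 ≤ TSW l (TSW m X Y) (TSW m U V) := by rw [TSW_eq_s18]; exact le_max_left _ _
      have hcT1 : TSW l X U ≤ 1 := by
        rw [TSW_eq_s18]
        exact max_le (by norm_num)
          (Fsw_le_one hl.le hX0.le hX1.le hU0.le hU1.le)
      have hdT1 : TSW l Y V ≤ 1 := by
        rw [TSW_eq_s18]
        exact max_le (by norm_num)
          (Fsw_le_one hl.le hY0.le hY1.le hV0.le hV1.le)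
      rcases le_or_gt (Fsw m (TSW l X U) (TSW l Y V)) 0 with hR | hR
      · rw [TSW_eq_s18 m (TSW l X U) (TSW l Y V), max_eq_left hR]; exact hLHS0
      -- R > 0 case
      have hcpos : 0 < Fsw l X U := by
        by_contra hc
        push_neg at hc
        rw [TSW_eq_s18 l X U, max_eq_left hc] at hR hcT1
        have := Fsw_zero_left hm.le hdT1
        linarith
      have hdpos : 0 < Fsw l Y V := by
        by_contra hdneg
        push_neg at hdneg
        rw [TSW_eq_s18 l Y V, max_eq_left hdneg] at hR
        have := Fsw_zero_right hm.le hcT1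
        linarith
      rw [TSW_eq_s18 l X U, max_eq_right hcpos.le] at hR
      rw [TSW_eq_s18 l Y V, max_eq_right hdpos.le] at hR
      -- rule out nonpositive inner values
      rcases le_or_gt (Fsw m X Y) 0 with hPa0 | hPa0
      · exfalso
        have hch := chainPb hl hm ⟨hU0.le, hU1.le⟩ ⟨hV0.le, hV1.le⟩ ⟨hX0.le, hX1.le⟩
          ⟨hY0.le, hY1.le⟩ (by rw [Fsw_comm]; exact hcpos) (by rw [Fsw_comm]; exact hdpos) hPa0
        rw [Fsw_comm l U X, Fsw_comm l V Y] at hch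
        linarith
      rcases le_or_gt (Fsw m U V) 0 with hPb0 | hPb0
      · exfalso
        have hch := chainPb hl hm ⟨hX0.le, hX1.le⟩ ⟨hY0.le, hY1.le⟩ ⟨hU0.le, hU1.le⟩
          ⟨hV0.le, hV1.le⟩ hcpos hdpos hPb0
        linarith
      -- main case: apply the reduced condition
      have hK : 0 < 1 + (l - 1) * (1 - Y) := by nlinarith
      have hv : (1 + (l - 1) * (1 - Y)) * V = 1 - (1 - Fsw l Y V) + l * (1 - Y) := by
        unfold Fsw; ring
      have hdlt : Fsw l Y V < Y := by
        unfold Fsw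
        nlinarith [mul_nonneg (mul_nonneg hl.le (by linarith : (0:ℝ) ≤ 1 - Y))
          (by linarith : (0:ℝ) ≤ 1 - V)]
      have hyw : 1 - Y < 1 - Fsw l Y V := by linarith
      have hw1 : 1 - Fsw l Y V < 1 + l * (1 - Y) := by nlinarith [mul_pos hK hV0, hv]
      have hcond := hC (1 - X) (1 - Y) (1 - U) (1 - Fsw l Y V)
        (by linarith) (by linarith) (by linarith) (by linarith)
        (by linarith) (by linarith) hyw hw1
      have hid1 := id1 l m (1 - X) (1 - U) (1 - Fsw l Y V)
      have hid2 := id2 l m (1 - X) (1 - Y) (1 - U) (1 - Fsw l Y V) V _ rfl hv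
      simp only [sub_sub_cancel] at hid1 hid2
      rcases hcond with hcond1 | hcond2
      · exfalso
        rw [hid1] at hcond1
        linarith
      · -- main inequality
        have hge : Fsw m (Fsw l X U) (Fsw l Y V) ≤ Fsw l (Fsw m X Y) (Fsw m U V) := by
          have h0 : 0 ≤ (m - l) *
              ((1 - Fsw l Y V) * (1 - X) * (1 - (l - 1) * (m - 1) * (1 - U) * (1 - Y)) +
                (1 - Y) * ((l - 1) * (1 - U) * (1 - Y) * ((m - 1) * (1 - X) + 1) + (1 - U) - (1 - X))) :=
            mul_nonneg (by linarith) hcond2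
          rw [← hid2] at h0
          by_contra hlt
          push_neg at hlt
          have hneg : (1 + (l - 1) * (1 - Y)) *
              (Fsw l (Fsw m X Y) (Fsw m U V) - Fsw m (Fsw l X U) (Fsw l Y V)) < 0 :=
            mul_neg_of_pos_of_neg hK (by linarith)
          linarith
        calc TSW m (TSW l X U) (TSW l Y V)
            = Fsw m (Fsw l X U) (Fsw l Y V) := by
              rw [TSW_eq_s18 l X U, max_eq_right hcpos.le, TSW_eq_s18 l Y V, max_eq_right hdpos.le,
                TSW_eq_s18 m, max_eq_right hR.le]
          _ ≤ Fsw l (Fsw m X Y) (Fsw m U V) := hge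
          _ ≤ TSW l (TSW m X Y) (TSW m U V) := by
              rw [TSW_eq_s18 m X Y, max_eq_right hPa0.le, TSW_eq_s18 m U V, max_eq_right hPb0.le,
                TSW_eq_s18 l]
              exact le_max_right _ _
    -- extend to the closed cube by continuity
    intro X Y U V hX hY hU hV
    rw [ge_iff_le, ← sub_nonneg]
    have contV : ∀ (A B C : ℝ), Continuous (fun s =>
        TSW l (TSW m A B) (TSW m C s) - TSW m (TSW l A C) (TSW l B s)) := by
      intro A B C
      exact (TSW_cont l continuous_const (TSW_cont m continuous_const continuous_id)).sub
        (TSW_cont m continuous_const (TSW_cont l continuous_const continuous_id))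
    have contU : ∀ (A B C : ℝ), Continuous (fun s =>
        TSW l (TSW m A B) (TSW m s C) - TSW m (TSW l A s) (TSW l B C)) := by
      intro A B C
      exact (TSW_cont l continuous_const (TSW_cont m continuous_id continuous_const)).sub
        (TSW_cont m (TSW_cont l continuous_const continuous_id) continuous_const)
    have contY : ∀ (A B C : ℝ), Continuous (fun s =>
        TSW l (TSW m A s) (TSW m B C) - TSW m (TSW l A B) (TSW l s C)) := by
      intro A B C
      exact (TSW_cont l (TSW_cont m continuous_const continuous_id) continuous_const).sub
        (TSW_cont m continuous_const (TSW_cont l continuous_id continuous_const))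
    have contX : ∀ (A B C : ℝ), Continuous (fun s =>
        TSW l (TSW m s A) (TSW m B C) - TSW m (TSW l s B) (TSW l A C)) := by
      intro A B C
      exact (TSW_cont l (TSW_cont m continuous_id continuous_const) continuous_const).sub
        (TSW_cont m (TSW_cont l continuous_id continuous_const) continuous_const)
    have step1 : ∀ A ∈ Ioo (0:ℝ) 1, ∀ B ∈ Ioo (0:ℝ) 1, ∀ C ∈ Ioo (0:ℝ) 1, ∀ D ∈ Icc (0:ℝ) 1,
        0 ≤ TSW l (TSW m A B) (TSW m C D) - TSW m (TSW l A C) (TSW l B D) := by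
      intro A hA B hB C hC' D hD
      exact extend_Icc (contV A B C)
        (fun t ht => sub_nonneg.2 (hopen A B C t hA hB hC' ht)) D hD
    have step2 : ∀ A ∈ Ioo (0:ℝ) 1, ∀ B ∈ Ioo (0:ℝ) 1, ∀ C ∈ Icc (0:ℝ) 1, ∀ D ∈ Icc (0:ℝ) 1,
        0 ≤ TSW l (TSW m A B) (TSW m C D) - TSW m (TSW l A C) (TSW l B D) := by
      intro A hA B hB C hC' D hD
      exact extend_Icc (contU A B D)
        (fun t ht => step1 A hA B hB t ht D hD) C hC'
    have step3 : ∀ A ∈ Ioo (0:ℝ) 1, ∀ B ∈ Icc (0:ℝ) 1, ∀ C ∈ Icc (0:ℝ) 1, ∀ D ∈ Icc (0:ℝ) 1,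
        0 ≤ TSW l (TSW m A B) (TSW m C D) - TSW m (TSW l A C) (TSW l B D) := by
      intro A hA B hB C hC' D hD
      exact extend_Icc (contY A C D)
        (fun t ht => step2 A hA t ht C hC' D hD) B hB
    exact extend_Icc (contX Y U V) (fun t ht => step3 t ht Y hY U hU V hV) X hX
end
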